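/- Let M be a separable metrizable space. Then there is a map φ : 𝒦(ℚ) → 𝒦(M) such that for every family S cofinal in (𝒦(ℚ),⊆) the image {φ(K) : K ∈ S} is a compact cover of M, if and only if M is Σ¹₂, i.e., there exist a Polish space Z, a subset A ⊆ Z whose complement Z \ A is analytic, and a continuous surjection from A (with the subspace topology) onto M. -/

import Mathlib

open Filter Topology MeasureTheory Set

namespace TukeySigma

abbrev Lst := List ℕ
abbrev Code := (Lst → ℕ) × (Lst → ℕ) × (Lst → Bool)

noncomputable def eQ : ℕ ≃ ℚ := (Denumerable.eqv ℚ).symm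

noncomputable def lab (c : Code) (s : Lst) : ℚ := eQ (c.1 s)
noncomputable def bv (c : Code) (s : Lst) : ℚ := eQ (c.2.1 s)
def Tt (c : Code) (s : Lst) : Bool := c.2.2 s
def inS (c : Code) (s : Lst) : Prop := ∀ t, t <+: s → Tt c t = true

def Dq (m : ℕ) : ℚ := (2⁻¹ : ℚ) ^ (m / 8)

def conds (c : Code) : Prop :=
  0 ≤ bv c [] ∧ ∀ s n, inS c (s ++ [n]) →
    |lab c (s ++ [n]) - lab c s| ≤ 2 * Dq n * bv c s ∧
    0 ≤ bv c (s ++ [n]) ∧ bv c (s ++ [n]) ≤ 2⁻¹ * Dq n * bv c s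

def pfx (y : ℕ → ℕ) (n : ℕ) : Lst := (List.range n).map y

def illf (c : Code) : Prop := ∃ y : ℕ → ℕ, ∀ n, Tt c (pfx y n) = true

noncomputable def KK (c : Code) : Set ℚ := lab c '' {s | inS c s}

lemma Dq_pos (m : ℕ) : 0 < Dq m := by unfold Dq; positivity

lemma Dq_le_one (m : ℕ) : Dq m ≤ 1 :=
  pow_le_one₀ (by norm_num) (by norm_num)

lemma pow_le_Dq (m : ℕ) : (2⁻¹ : ℚ) ^ m ≤ Dq m :=
  pow_le_pow_of_le_one (by norm_num) (by norm_num) (Nat.div_le_self m 8)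

lemma inS_mono {c : Code} {s t : Lst} (h : inS c t) (hp : s <+: t) : inS c s :=
  fun u hu => h u (hu.trans hp)

lemma inS_snoc {c : Code} {s : Lst} {n : ℕ} (h : inS c (s ++ [n])) : inS c s :=
  inS_mono h (List.prefix_append s [n])

lemma bv_nonneg {c : Code} (hc : conds c) {s : Lst} (hs : inS c s) : 0 ≤ bv c s := by
  induction s using List.reverseRecOn with
  | nil => exact hc.1
  | append_singleton s n _ => exact (hc.2 s n hs).2.1

lemma prefix_step {s t : Lst} (h : s <+: t) (hne : s ≠ t) :
    s ++ [(t.drop s.length).headD 0] <+: t := by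
  obtain ⟨r, rfl⟩ := h
  cases r with
  | nil => simp at hne
  | cons a r' =>
      rw [List.drop_left]
      simpa using (List.prefix_append (s ++ [a]) r')

lemma pfx_succ (y : ℕ → ℕ) (n : ℕ) : pfx y (n + 1) = pfx y n ++ [y n] := by
  simp [pfx, List.range_succ]

lemma pfx_length (y : ℕ → ℕ) (n : ℕ) : (pfx y n).length = n := by simp [pfx]

lemma pfx_prefix (y : ℕ → ℕ) {m n : ℕ} (h : m ≤ n) : pfx y m <+: pfx y n := by
  induction n with
  | zero => simp_all [Nat.le_zero]
  | succ n ih =>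
      rcases Nat.eq_or_lt_of_le h with rfl | h'
      · exact List.prefix_refl _
      · exact (ih (Nat.lt_succ_iff.mp h')).trans (by rw [pfx_succ]; exact List.prefix_append _ _)

/-- chain bound : within a code satisfying `conds`, labels along a chain stay close. -/
lemma chain0 {c : Code} (hc : conds c) :
    ∀ k t s, inS c t → s <+: t → t.length - s.length = k → |lab c t - lab c s| ≤ 4 * bv c s := by
  intro k
  induction k with
  | zero =>
      intro t s ht hp hl
      have : s = t := hp.eq_of_length (Nat.le_antisymm hp.length_le (by omega))
      subst this
      have h0 : 0 ≤ bv c s := bv_nonneg hc ht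
      simpa using by linarith [abs_nonneg (lab c s - lab c s)]
  | succ k ih =>
      intro t s ht hp hl
      have hne : s ≠ t := by
        intro h; subst h; omega
      set m := (t.drop s.length).headD 0 with hm
      have hp' : s ++ [m] <+: t := prefix_step hp hne
      have hlen : t.length - (s ++ [m]).length = k := by
        have := hp'.length_le; simp at this ⊢; omega
      have h1 : |lab c t - lab c (s ++ [m])| ≤ 4 * bv c (s ++ [m]) := ih t (s ++ [m]) ht hp' hlen
      have hin : inS c (s ++ [m]) := inS_mono ht hp'
      obtain ⟨h2, h3, h4⟩ := hc.2 s m hin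
      have h5 : 0 ≤ bv c s := bv_nonneg hc (inS_snoc hin)
      have hD1 : Dq m ≤ 1 := Dq_le_one m
      have hD0 : 0 < Dq m := Dq_pos m
      calc |lab c t - lab c s| ≤ |lab c t - lab c (s ++ [m])| + |lab c (s ++ [m]) - lab c s| := by
            have := abs_sub_abs_le_abs_sub (lab c t) (lab c s)
            have := abs_sub_le (lab c t) (lab c (s ++ [m])) (lab c s)
            linarith
        _ ≤ 4 * (2⁻¹ * Dq m * bv c s) + 2 * Dq m * bv c s := by nlinarith
        _ ≤ 4 * bv c s := by nlinarith

lemma chain1 {c : Code} (hc : conds c) {s t : Lst} {m : ℕ} (ht : inS c t)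
    (hp : s ++ [m] <+: t) : |lab c t - lab c s| ≤ 4 * Dq m * bv c s := by
  have h1 : |lab c t - lab c (s ++ [m])| ≤ 4 * bv c (s ++ [m]) :=
    chain0 hc _ t (s ++ [m]) ht hp rfl
  have hin : inS c (s ++ [m]) := inS_mono ht hp
  obtain ⟨h2, h3, h4⟩ := hc.2 s m hin
  have h5 : 0 ≤ bv c s := bv_nonneg hc (inS_snoc hin)
  calc |lab c t - lab c s| ≤ |lab c t - lab c (s ++ [m])| + |lab c (s ++ [m]) - lab c s| := by
        have := abs_sub_le (lab c t) (lab c (s ++ [m])) (lab c s)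
        linarith
    _ ≤ 4 * Dq m * bv c s := by nlinarith


def exy (y : ℕ → ℕ) (i : ℕ) : ℕ := (i+1)^2 + ∑ j ∈ Finset.range (i+1), y j
noncomputable def stp (y : ℕ → ℕ) (i : ℕ) : ℚ := (2⁻¹ : ℚ) ^ (exy y i)
noncomputable def aseq (y : ℕ → ℕ) (n : ℕ) : ℚ := ∑ i ∈ Finset.range n, stp y i

lemma exy_mono (y : ℕ → ℕ) : Monotone (exy y) := by
  intro i j hij
  unfold exy
  have h1 : (i+1)^2 ≤ (j+1)^2 := Nat.pow_le_pow_left (by omega) 2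
  have h2 : ∑ k ∈ Finset.range (i+1), y k ≤ ∑ k ∈ Finset.range (j+1), y k :=
    Finset.sum_le_sum_of_subset (Finset.range_subset_range.mpr (by omega))
  omega

lemma exy_succ_ge (y : ℕ → ℕ) (i : ℕ) : exy y i + (2*i+3) ≤ exy y (i+1) := by
  unfold exy
  have h2 : ∑ k ∈ Finset.range (i+1), y k ≤ ∑ k ∈ Finset.range (i+1+1), y k :=
    Finset.sum_le_sum_of_subset (Finset.range_subset_range.mpr (by omega))
  have : (i+1+1)^2 = (i+1)^2 + (2*i+3) := by ring
  omega

lemma stp_pos (y : ℕ → ℕ) (i : ℕ) : 0 < stp y i := by unfold stp; positivity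

lemma stp_succ_le (y : ℕ → ℕ) (i : ℕ) : stp y (i+1) ≤ 2⁻¹ * stp y i := by
  unfold stp
  rw [← pow_succ']
  exact pow_le_pow_of_le_one (by norm_num) (by norm_num)
    (by have := exy_succ_ge y i; omega)

lemma aseq_succ (y : ℕ → ℕ) (n : ℕ) : aseq y (n+1) = aseq y n + stp y n := by
  unfold aseq; rw [Finset.sum_range_succ]

lemma aseq_strictMono (y : ℕ → ℕ) : StrictMono (aseq y) :=
  strictMono_nat_of_lt_succ (fun n => by rw [aseq_succ]; linarith [stp_pos y n])

lemma aseq_tail (y : ℕ → ℕ) : ∀ n m, n ≤ m →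
    aseq y m + 2 * stp y m ≤ aseq y n + 2 * stp y n := by
  intro n m hnm
  induction m with
  | zero => simp_all [Nat.le_zero]
  | succ m ih =>
      rcases Nat.eq_or_lt_of_le hnm with rfl | h'
      · exact le_refl _
      · have h1 := ih (Nat.lt_succ_iff.mp h')
        have h2 := stp_succ_le y m
        rw [aseq_succ]
        linarith

lemma noRatLimit (y : ℕ → ℕ) (r : ℚ) (ρ : ℕ → ℕ) (hρ : StrictMono ρ)
    (h : Tendsto (fun j => aseq y (ρ j)) atTop (𝓝 r)) : False := by
  have hub : ∀ n, aseq y n ≤ r := by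
    intro n
    have hmono : Monotone fun j => aseq y (ρ j) :=
      (aseq_strictMono y).comp hρ |>.monotone
    have h1 : aseq y (ρ n) ≤ r := hmono.ge_of_tendsto h n
    exact le_trans ((aseq_strictMono y).monotone (hρ.le_apply)) h1
  have hup : ∀ N : ℕ, r ≤ aseq y (N+1) + 2 * stp y (N+1) := by
    intro N
    refine le_of_tendsto h ?_
    filter_upwards [eventually_ge_atTop (N+1)] with j hj
    have h1 : N + 1 ≤ ρ j := le_trans hj hρ.le_apply
    have h2 := aseq_tail y (N+1) (ρ j) h1
    have h3 := stp_pos y (ρ j)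
    linarith
  have hlow : ∀ N : ℕ, aseq y (N+1) + stp y (N+1) ≤ r := by
    intro N
    have := hub (N+2)
    rw [aseq_succ] at this
    linarith
  -- now the integrality contradiction with N := r.den
  set N := r.den with hN
  set e := exy y N with he
  set A : ℕ := ∑ i ∈ Finset.range (N+1), 2 ^ (e - exy y i) with hA
  have hcastA : aseq y (N+1) * 2 ^ e = (A : ℚ) := by
    unfold aseq
    rw [Finset.sum_mul]
    rw [hA]
    push_cast
    refine Finset.sum_congr rfl (fun i hi => ?_)
    have hie : exy y i ≤ e := exy_mono y (by simp at hi; omega)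
    unfold stp
    rw [inv_pow, pow_sub₀ (2:ℚ) (by norm_num) hie]
    ring
  set z : ℤ := r.num * 2 ^ e - (r.den : ℤ) * A with hz
  have hcastz : (z : ℚ) = (r - aseq y (N+1)) * r.den * 2 ^ e := by
    have h1 : ((r.num:ℚ)) = r * r.den := by exact_mod_cast (Rat.mul_den_eq_num r).symm
    rw [hz]
    push_cast
    rw [h1, ← hcastA]
    ring
  have hdenpos : (0:ℚ) < (r.den : ℚ) := by exact_mod_cast r.pos
  have hzpos : (0:ℚ) < (z:ℚ) := by
    rw [hcastz]
    have h1 := hlow N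
    have h2 := stp_pos y (N+1)
    have : 0 < r - aseq y (N+1) := by linarith
    positivity
  have hzlt : (z:ℚ) < 1 := by
    rw [hcastz]
    have h1 := hup N
    have h2 : r - aseq y (N+1) ≤ 2 * stp y (N+1) := by linarith
    have hgap : e + (2*N+3) ≤ exy y (N+1) := by rw [he]; exact exy_succ_ge y N
    have h4 : stp y (N+1) ≤ (2⁻¹:ℚ) ^ (e + (2*N+3)) :=
      pow_le_pow_of_le_one (by norm_num) (by norm_num) hgap
    have hpe : (0:ℚ) < 2 ^ e := by positivity
    have h5 : (r - aseq y (N+1)) * r.den * 2 ^ e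
        ≤ 2 * (2⁻¹:ℚ) ^ (e + (2*N+3)) * r.den * 2 ^ e := by
      have hd2 : (0:ℚ) ≤ (r.den:ℚ) * 2 ^ e := by positivity
      have h6 : r - aseq y (N+1) ≤ 2 * (2⁻¹:ℚ) ^ (e + (2*N+3)) := by linarith
      calc (r - aseq y (N+1)) * r.den * 2 ^ e
          = (r - aseq y (N+1)) * ((r.den:ℚ) * 2^e) := by ring
        _ ≤ (2 * (2⁻¹:ℚ) ^ (e+(2*N+3))) * ((r.den:ℚ) * 2^e) :=
            mul_le_mul_of_nonneg_right h6 hd2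
        _ = 2 * (2⁻¹:ℚ) ^ (e + (2*N+3)) * r.den * 2 ^ e := by ring
    refine lt_of_le_of_lt h5 ?_
    have hden : (r.den:ℚ) * 2 < 2 ^ (2*N+3) := by
      have h8 : r.den * 2 < 2 ^ (2*N+3) := by
        have h6 : r.den < 2 ^ r.den := Nat.lt_two_pow_self
        have h7 : 2 ^ (r.den+1) ≤ 2 ^ (2*N+3) := Nat.pow_le_pow_right (by norm_num) (by omega)
        calc r.den * 2 < 2 ^ r.den * 2 := by omega
          _ = 2 ^ (r.den+1) := by ring
          _ ≤ _ := h7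
      exact_mod_cast h8
    have hpos1 : (0:ℚ) < 2 ^ (e + (2*N+3)) := by positivity
    rw [inv_pow]
    rw [show (2:ℚ) * ((2:ℚ)^(e+(2*N+3)))⁻¹ * r.den * 2^e
        = (2 * r.den * 2^e) / (2^(e+(2*N+3))) by ring]
    rw [div_lt_one hpos1, pow_add]
    calc 2 * (r.den:ℚ) * 2^e = ((r.den:ℚ) * 2) * 2^e := by ring
      _ < 2^(2*N+3) * 2^e := mul_lt_mul_of_pos_right hden hpe
      _ = 2^e * 2^(2*N+3) := by ring
  have hz1 : 1 ≤ z := by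
    have : (0:ℤ) < z := by exact_mod_cast hzpos
    omega
  have : (1:ℚ) ≤ (z:ℚ) := by exact_mod_cast hz1
  linarith


lemma exists_chain_of_not_wf {α : Type*} {r : α → α → Prop} (h : ¬ WellFounded r) :
    ∃ f : ℕ → α, ∀ n, r (f (n + 1)) (f n) := by
  classical
  have hex : ∃ a, ¬ Acc r a := by
    by_contra h'
    push_neg at h'
    exact h ⟨fun a => h' a⟩
  have step : ∀ x : {x : α // ¬ Acc r x}, ∃ y : {x : α // ¬ Acc r x}, r y.1 x.1 := by
    rintro ⟨x, hx⟩
    by_contra h'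
    push_neg at h'
    refine hx (Acc.intro x (fun y hy => ?_))
    by_contra hny
    exact h' ⟨y, hny⟩ hy
  choose g hg using step
  obtain ⟨a, ha⟩ := hex
  let f : ℕ → {x : α // ¬ Acc r x} := fun n => g^[n] ⟨a, ha⟩
  refine ⟨fun n => (f n).1, fun n => ?_⟩
  show r (f (n+1)).1 (f n).1
  have h5 : f (n + 1) = g (f n) := Function.iterate_succ_apply' g n _
  rw [h5]
  exact hg (f n)

/-- If a code's tree is well-founded then the "child-extension" relation is well-founded. -/
lemma wf_code {c : Code} (hwf : ¬ illf c) :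
    WellFounded (fun a b : Lst => (∃ m, a = b ++ [m]) ∧ inS c a) := by
  by_contra h
  obtain ⟨f, hf⟩ := exists_chain_of_not_wf h
  choose m hm using fun n => (hf n).1
  have hlen : ∀ n, (f n).length = (f 0).length + n := by
    intro n
    induction n with
    | zero => rfl
    | succ n ih => rw [hm n, List.length_append, ih]; simp; omega
  have hpre : ∀ {a b : ℕ}, a ≤ b → f a <+: f b := by
    intro a b hab
    induction b with
    | zero => simp_all [Nat.le_zero]
    | succ b ih =>
        rcases Nat.eq_or_lt_of_le hab with rfl | h'
        · exact List.prefix_refl _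
        · exact (ih (Nat.lt_succ_iff.mp h')).trans (by rw [hm b]; exact List.prefix_append _ _)
  set y : ℕ → ℕ := fun i => (f (i + 1)).getD i 0 with hy
  have htake : ∀ n, pfx y n = (f n).take n := by
    intro n
    induction n with
    | zero => simp [pfx]
    | succ n ih =>
        rw [pfx_succ, ih]
        have h1 : n < (f (n + 1)).length := by rw [hlen]; omega
        have h2 : (f (n + 1)).take n = (f n).take n := by
          rw [hm n, List.take_append_of_le_length (by rw [hlen]; omega)]
        rw [← h2, List.take_succ]
        congr 1
        rw [List.getElem?_eq_getElem h1]
        have h4 : y n = (f (n+1))[n] := List.getD_eq_getElem (f (n+1)) 0 h1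
        rw [h4]
        rfl
  apply hwf
  refine ⟨y, fun n => ?_⟩
  have h4 : pfx y n <+: f (n + 1) := by
    rw [htake n]
    exact (List.take_prefix _ _).trans (hpre (Nat.le_succ n))
  exact (hf n).2 _ h4

def agree (d c : Code) (s : Lst) : Prop :=
  d.1 s = c.1 s ∧ d.2.1 s = c.2.1 s ∧ d.2.2 s = c.2.2 s

lemma agree_lab {d c : Code} {s : Lst} (h : agree d c s) :
    lab d s = lab c s ∧ bv d s = bv c s ∧ Tt d s = Tt c s := by
  unfold lab bv Tt
  exact ⟨by rw [h.1], by rw [h.2.1], by rw [h.2.2]⟩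

/-- Master sequential-compactness lemma for labels of (possibly varying) codes. -/
lemma master (c : Code) (hc : conds c) (hwf : ¬ illf c)
    (d : ℕ → Code) (hd : ∀ k, conds (d k))
    (hev : ∀ s, ∀ᶠ k in atTop, agree (d k) c s)
    (t : ℕ → Lst) (ht : ∀ k, inS (d k) (t k)) :
    ∃ x, (x ∈ KK c ∨ ∃ k, x ∈ KK (d k)) ∧
      ∃ φ : ℕ → ℕ, StrictMono φ ∧
        Tendsto (fun j => lab (d (φ j)) (t (φ j))) atTop (𝓝 x) := by
  classical
  set R : Lst → Lst → Prop := fun a b => (∃ m, a = b ++ [m]) ∧ inS c a with hR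
  have hRwf : WellFounded R := wf_code hwf
  set P : Lst → Prop := fun s =>
    ∀ (d : ℕ → Code) (t : ℕ → Lst), (∀ k, conds (d k)) →
      (∀ s', ∀ᶠ k in atTop, agree (d k) c s') →
      (∀ k, inS (d k) (t k)) → (∀ k, s <+: t k) →
      ∃ x, (x ∈ KK c ∨ ∃ k, x ∈ KK (d k)) ∧
        ∃ φ : ℕ → ℕ, StrictMono φ ∧
          Tendsto (fun j => lab (d (φ j)) (t (φ j))) atTop (𝓝 x) with hP
  have main : ∀ s, P s := by
    intro s
    refine hRwf.induction s ?_
    intro s IH d t hd hev ht hst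
    set g : ℕ → ℕ := fun k =>
      if t k = s then 0 else ((t k).drop s.length).headD 0 + 1 with hg
    have hsc : inS c s := by
      intro u hu
      obtain ⟨k, hk⟩ := (hev u).exists
      rw [← (agree_lab hk).2.2]
      exact ht k u (hu.trans (hst k))
    by_cases hfin : ∃ v, {k | g k = v}.Infinite
    · obtain ⟨v, hv⟩ := hfin
      set φ := Nat.nth (fun k => g k = v) with hφ
      have hφmono : StrictMono φ := Nat.nth_strictMono hv
      have hφT : Tendsto φ atTop atTop := hφmono.tendsto_atTop
      have hφmem : ∀ j, g (φ j) = v := fun j => Nat.nth_mem_of_infinite hv j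
      cases v with
      | zero =>
          have heq : ∀ j, t (φ j) = s := by
            intro j
            have h1 := hφmem j
            by_contra h2
            simp only [hg, if_neg h2] at h1
            omega
          refine ⟨lab c s, Or.inl ⟨s, hsc, rfl⟩, φ, hφmono, ?_⟩
          have hEv : ∀ᶠ j in atTop, lab (d (φ j)) (t (φ j)) = lab c s := by
            filter_upwards [hφT.eventually (hev s)] with j hj
            rw [heq j, (agree_lab hj).1]
          exact Tendsto.congr' (hEv.mono fun j h => h.symm) tendsto_const_nhds
      | succ m =>
          have hstep : ∀ j, s ++ [m] <+: t (φ j) := by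
            intro j
            have h1 := hφmem j
            by_cases h2 : t (φ j) = s
            · simp [hg, h2] at h1
            · simp only [hg, if_neg h2] at h1
              have h3 := prefix_step (hst (φ j)) (fun h => h2 h.symm)
              rwa [Nat.succ_injective h1] at h3
          have hin' : inS c (s ++ [m]) := by
            intro u hu
            obtain ⟨j, hj⟩ := (hφT.eventually (hev u)).exists
            rw [← (agree_lab hj).2.2]
            exact ht (φ j) u (hu.trans (hstep j))
          obtain ⟨x, hx, ψ, hψ, hlim⟩ :=
            IH (s ++ [m]) ⟨⟨m, rfl⟩, hin'⟩ (fun j => d (φ j)) (fun j => t (φ j))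
              (fun j => hd (φ j)) (fun s' => hφT.eventually (hev s'))
              (fun j => ht (φ j)) hstep
          refine ⟨x, ?_, φ ∘ ψ, hφmono.comp hψ, hlim⟩
          rcases hx with h | ⟨j, h⟩
          · exact Or.inl h
          · exact Or.inr ⟨φ j, h⟩
    · push_neg at hfin
      have hgT : Tendsto g atTop atTop := by
        refine tendsto_atTop.mpr (fun N => ?_)
        have hfinN : {k | g k < N}.Finite := by
          have hsub : {k | g k < N} ⊆ ⋃ v ∈ Finset.range N, {k | g k = v} := by
            intro k hk
            simp only [Set.mem_iUnion]
            exact ⟨g k, by simpa using hk, rfl⟩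
          exact Set.Finite.subset
            (Set.Finite.biUnion (Finset.range N).finite_toSet
              (fun v _ => hfin v)) hsub
        have := hfinN.eventually_cofinite_notMem
        rw [Nat.cofinite_eq_atTop] at this
        filter_upwards [this] with k hk
        simpa using not_lt.mp hk
      refine ⟨lab c s, Or.inl ⟨s, hsc, rfl⟩, id, strictMono_id, ?_⟩
      rw [tendsto_iff_dist_tendsto_zero]
      have hbv0 : (0:ℚ) ≤ bv c s := bv_nonneg hc hsc
      have hbound : ∀ᶠ k in atTop,
          dist (lab (d k) (t k)) (lab c s) ≤ (4 * bv c s : ℚ) * ((2:ℝ)⁻¹ ^ ((g k - 1)/8)) := by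
        filter_upwards [hev s, hgT.eventually_ge_atTop 1] with k hk hk1
        have h2 : t k ≠ s := by
          intro h; simp [hg, h] at hk1
        have h3 : s ++ [g k - 1] <+: t k := by
          have := prefix_step (hst k) (fun h => h2 h.symm)
          have h4 : g k - 1 = ((t k).drop s.length).headD 0 := by
            simp only [hg, if_neg h2]
            omega
          rwa [h4]
        have h5 : |lab (d k) (t k) - lab (d k) s| ≤ 4 * Dq (g k - 1) * bv (d k) s :=
          chain1 (hd k) (ht k) h3
        rw [(agree_lab hk).1, (agree_lab hk).2.1] at h5
        rw [Rat.dist_eq, ← Rat.cast_sub, ← Rat.cast_abs]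
        have h6 : ((|lab (d k) (t k) - lab c s| : ℚ) : ℝ)
            ≤ ((4 * Dq (g k - 1) * bv c s : ℚ) : ℝ) := by exact_mod_cast h5
        refine h6.trans (le_of_eq ?_)
        unfold Dq
        push_cast
        ring
      have hRHS : Tendsto (fun k => (4 * bv c s : ℚ) * ((2:ℝ)⁻¹ ^ ((g k - 1)/8)))
          atTop (𝓝 0) := by
        have hexp : Tendsto (fun k => (g k - 1)/8) atTop atTop := by
          refine tendsto_atTop.mpr (fun N => ?_)
          filter_upwards [hgT.eventually_ge_atTop (8*N+1)] with k hk
          omega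
        have hpow : Tendsto (fun n : ℕ => (2:ℝ)⁻¹ ^ n) atTop (𝓝 0) :=
          tendsto_pow_atTop_nhds_zero_of_lt_one (by norm_num) (by norm_num)
        have := (hpow.comp hexp).const_mul ((4 * bv c s : ℚ) : ℝ)
        simpa using this
      refine squeeze_zero' (Eventually.of_forall (fun k => dist_nonneg)) hbound hRHS
  have := main [] d t hd hev ht (fun k => List.nil_prefix)
  exact this

/-! ### q-codes -/

def exq (t : Lst) : ℕ := t.length^2 + t.sum
noncomputable def qlab (s : Lst) : ℚ := aseq (fun i => s.getD i 0) s.length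
noncomputable def qBv (s : Lst) : ℚ := (2⁻¹:ℚ) ^ ((s.length+1)^2 + s.sum)

lemma exy_congr {y y' : ℕ → ℕ} {i : ℕ} (h : ∀ j < i + 1, y j = y' j) :
    exy y i = exy y' i := by
  unfold exy
  congr 1
  exact Finset.sum_congr rfl (fun j hj => h j (by simpa using hj))

lemma aseq_congr {y y' : ℕ → ℕ} {n : ℕ} (h : ∀ j < n, y j = y' j) :
    aseq y n = aseq y' n := by
  unfold aseq
  refine Finset.sum_congr rfl (fun i hi => ?_)
  unfold stp
  rw [exy_congr (fun j hj => h j (by simp at hi; omega))]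

lemma pfx_getD {y : ℕ → ℕ} {i n : ℕ} (h : i < n) : (pfx y n).getD i 0 = y i := by
  have h1 : i < (pfx y n).length := by rw [pfx_length]; exact h
  rw [List.getD_eq_getElem _ _ h1]
  simp [pfx]

lemma qlab_pfx (y : ℕ → ℕ) (n : ℕ) : qlab (pfx y n) = aseq y n := by
  unfold qlab
  rw [pfx_length]
  exact aseq_congr (fun j hj => pfx_getD hj)

lemma sum_getD (t : Lst) : ∑ j ∈ Finset.range t.length, t.getD j 0 = t.sum := by
  induction t using List.reverseRecOn with
  | nil => simp
  | append_singleton s n ih =>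
      rw [List.length_append, List.sum_append]
      simp only [List.length_singleton, List.sum_cons, List.sum_nil]
      rw [Finset.sum_range_succ]
      have h1 : ∀ j ∈ Finset.range s.length, (s ++ [n]).getD j 0 = s.getD j 0 := by
        intro j hj
        simp at hj
        rw [List.getD_append _ _ _ _ hj]
      rw [Finset.sum_congr rfl h1, ih]
      have h2 : (s ++ [n]).getD s.length 0 = n := by
        have : s.length < (s ++ [n]).length := by simp
        rw [List.getD_eq_getElem _ _ this]
        simp
      rw [h2]
      omega

lemma exq_snoc (s : Lst) (n : ℕ) : exq (s ++ [n]) = (s.length+1)^2 + s.sum + n := by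
  simp [exq]
  ring

lemma qlab_snoc (s : Lst) (n : ℕ) :
    qlab (s ++ [n]) = qlab s + (2⁻¹:ℚ) ^ exq (s ++ [n]) := by
  unfold qlab
  have hlen : (s ++ [n]).length = s.length + 1 := by simp
  rw [hlen, aseq_succ]
  congr 1
  · rw [aseq_congr (y' := fun i => s.getD i 0) (fun j hj => List.getD_append _ _ _ _ hj)]
  · unfold stp
    congr 1
    unfold exy
    rw [exq_snoc]
    have h1 : ∀ j ∈ Finset.range (s.length + 1), (s ++ [n]).getD j 0
        = (fun j => (s ++ [n]).getD j 0) j := fun _ _ => rfl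
    have h2 : ∑ j ∈ Finset.range (s.length + 1), (s ++ [n]).getD j 0 = (s ++ [n]).sum := by
      have := sum_getD (s ++ [n])
      rwa [hlen] at this
    rw [h2]
    simp [List.sum_append]
    ring

lemma qBv_pos (s : Lst) : 0 < qBv s := by unfold qBv; positivity

lemma qdisp (s : Lst) (n : ℕ) :
    (2⁻¹:ℚ) ^ exq (s ++ [n]) = qBv s * (2⁻¹:ℚ) ^ n := by
  rw [exq_snoc]
  unfold qBv
  rw [← pow_add]

lemma qBv_snoc_le (s : Lst) (n : ℕ) : qBv (s ++ [n]) ≤ 2⁻¹ * Dq n * qBv s := by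
  unfold qBv Dq
  rw [← pow_succ', ← pow_add]
  refine pow_le_pow_of_le_one (by norm_num) (by norm_num) ?_
  simp only [List.length_append, List.sum_append, List.length_singleton,
    List.sum_cons, List.sum_nil]
  have h1 : n / 8 ≤ n := Nat.div_le_self n 8
  have h2 : (s.length + 1 + 1)^2 = (s.length+1)^2 + (2*s.length + 3) := by ring
  omega

open Classical in
noncomputable def qcode (S : Set Lst) : Code :=
  (fun s => eQ.symm (qlab s), fun s => eQ.symm (qBv s),
   fun s => if s ∈ S then true else false)

lemma lab_qcode (S : Set Lst) (s : Lst) : lab (qcode S) s = qlab s := by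
  unfold lab qcode
  simp

lemma bv_qcode (S : Set Lst) (s : Lst) : bv (qcode S) s = qBv s := by
  unfold bv qcode
  simp

lemma Tt_qcode (S : Set Lst) (s : Lst) : Tt (qcode S) s = true ↔ s ∈ S := by
  unfold Tt qcode
  simp only []
  split <;> simp_all

lemma conds_qcode (S : Set Lst) : conds (qcode S) := by
  constructor
  · rw [bv_qcode]; exact (qBv_pos _).le
  · intro s n _
    simp only [lab_qcode, bv_qcode]
    rw [qlab_snoc]
    refine ⟨?_, (qBv_pos _).le, qBv_snoc_le s n⟩
    rw [add_sub_cancel_left, abs_of_pos (by positivity), qdisp]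
    have h1 : (2⁻¹:ℚ) ^ n ≤ Dq n := pow_le_Dq n
    have h2 := qBv_pos s
    have h3 := Dq_pos n
    nlinarith

lemma inS_qcode {S : Set Lst} (hS : ∀ {a b : Lst}, a <+: b → b ∈ S → a ∈ S) {s : Lst} :
    inS (qcode S) s ↔ s ∈ S := by
  constructor
  · intro h
    exact (Tt_qcode S s).mp (h s (List.prefix_refl s))
  · intro h t ht
    exact (Tt_qcode S t).mpr (hS ht h)

lemma illf_qcode {S : Set Lst} : illf (qcode S) ↔ ∃ y : ℕ → ℕ, ∀ n, pfx y n ∈ S := by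
  unfold illf
  constructor
  · rintro ⟨y, hy⟩
    exact ⟨y, fun n => (Tt_qcode S _).mp (hy n)⟩
  · rintro ⟨y, hy⟩
    exact ⟨y, fun n => (Tt_qcode S _).mpr (hy n)⟩

lemma no_aseq_seq_in_compact {K : Set ℚ} (hK : IsCompact K) (y : ℕ → ℕ) (ρ : ℕ → ℕ)
    (hρ : StrictMono ρ) (h : ∀ j, aseq y (ρ j) ∈ K) : False := by
  obtain ⟨r, _, φ, hφ, hlim⟩ := hK.tendsto_subseq h
  exact noRatLimit y r (ρ ∘ φ) (hρ.comp hφ) hlim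

/-- the tree of lists all whose nonempty prefixes have labels in K -/
def thTree (K : Set ℚ) : Set Lst := {s | ∀ t, t <+: s → t ≠ [] → qlab t ∈ K}

lemma thTree_prefix_closed {K : Set ℚ} : ∀ {a b : Lst}, a <+: b → b ∈ thTree K → a ∈ thTree K :=
  fun hab hb t ht hne => hb t (ht.trans hab) hne

lemma thTree_wf {K : Set ℚ} (hK : IsCompact K) : ¬ illf (qcode (thTree K)) := by
  rw [illf_qcode]
  rintro ⟨y, hy⟩
  refine no_aseq_seq_in_compact hK y (fun j => j + 1) (strictMono_id.add_const 1) (fun j => ?_)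
  rw [← qlab_pfx]
  exact hy (j+1) (pfx y (j+1)) (List.prefix_refl _) (by simp [pfx])

/-! ### compactness of label sets -/

lemma agree_rfl (c : Code) (s : Lst) : agree c c s := ⟨rfl, rfl, rfl⟩

lemma tendsto_atTop_of_finite_fibers {v : ℕ → ℕ} (h : ∀ w, {n | v n = w}.Finite) :
    Tendsto v atTop atTop := by
  refine tendsto_atTop.mpr (fun N => ?_)
  have hfinN : {k | v k < N}.Finite := by
    have hsub : {k | v k < N} ⊆ ⋃ w ∈ Finset.range N, {k | v k = w} := by
      intro k hk
      simp only [Set.mem_iUnion]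
      exact ⟨v k, by simpa using hk, rfl⟩
    exact Set.Finite.subset
      (Set.Finite.biUnion (Finset.range N).finite_toSet (fun w _ => h w)) hsub
  have := hfinN.eventually_cofinite_notMem
  rw [Nat.cofinite_eq_atTop] at this
  filter_upwards [this] with k hk
  simpa using not_lt.mp hk

lemma cptKK {c : Code} (hc : conds c) (hwf : ¬ illf c) : IsCompact (KK c) := by
  refine IsSeqCompact.isCompact ?_
  intro x hx
  choose t htS hteq using hx
  obtain ⟨a, ha, φ, hφ, hlim⟩ := master c hc hwf (fun _ => c) (fun _ => hc)
    (fun s => Eventually.of_forall (fun _ => agree_rfl c s)) t htS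
  have ha' : a ∈ KK c := by rcases ha with h | ⟨_, h⟩ <;> exact h
  refine ⟨a, ha', φ, hφ, ?_⟩
  have heq : (fun j => lab ((fun _ => c) (φ j)) (t (φ j))) = x ∘ φ := by
    funext j; exact hteq (φ j)
  rwa [heq] at hlim

lemma cptU {c : Code} (hc : conds c) (hwf : ¬ illf c) (d : ℕ → Code)
    (hd : ∀ k, conds (d k)) (hdwf : ∀ k, ¬ illf (d k))
    (hev : ∀ s, ∀ᶠ k in atTop, agree (d k) c s) :
    IsCompact (KK c ∪ ⋃ k, KK (d k)) := by
  classical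
  refine IsSeqCompact.isCompact ?_
  intro x hx
  have hx' : ∀ n, x n ∈ KK c ∨ ∃ k, x n ∈ KK (d k) := by
    intro n
    have := hx n
    simpa using this
  have sel : ∀ n, ∃ v : ℕ, (v = 0 ∧ x n ∈ KK c) ∨ (∃ k, v = k + 1 ∧ x n ∈ KK (d k)) := by
    intro n
    rcases hx' n with h | ⟨k, h⟩
    exacts [⟨0, Or.inl ⟨rfl, h⟩⟩, ⟨k+1, Or.inr ⟨k, rfl, h⟩⟩]
  choose v hv using sel
  by_cases hfin : ∃ w, {n | v n = w}.Infinite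
  · obtain ⟨w, hw⟩ := hfin
    set φ := Nat.nth (fun n => v n = w) with hφdef
    have hφmono : StrictMono φ := Nat.nth_strictMono hw
    have hφmem : ∀ j, v (φ j) = w := fun j => Nat.nth_mem_of_infinite hw j
    cases w with
    | zero =>
        have hmem : ∀ j, x (φ j) ∈ KK c := by
          intro j
          rcases hv (φ j) with ⟨_, h⟩ | ⟨k, hk, _⟩
          · exact h
          · rw [hφmem j] at hk; omega
        obtain ⟨a, ha, ψ, hψ, hl⟩ := (cptKK hc hwf).isSeqCompact hmem
        exact ⟨a, Or.inl ha, φ ∘ ψ, hφmono.comp hψ, hl⟩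
    | succ k =>
        have hmem : ∀ j, x (φ j) ∈ KK (d k) := by
          intro j
          rcases hv (φ j) with ⟨h0, _⟩ | ⟨k', hk', h⟩
          · rw [hφmem j] at h0; omega
          · have : k' = k := by rw [hφmem j] at hk'; omega
            rwa [← this]
        obtain ⟨a, ha, ψ, hψ, hl⟩ := ((cptKK (hd k) (hdwf k))).isSeqCompact hmem
        exact ⟨a, Or.inr (Set.mem_iUnion.mpr ⟨k, ha⟩), φ ∘ ψ, hφmono.comp hψ, hl⟩
  · push_neg at hfin
    have hfin' : ∀ w, {n | v n = w}.Finite := fun w => hfin w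
    have hvT : Tendsto v atTop atTop := tendsto_atTop_of_finite_fibers hfin'
    have hinf : {n | ¬ (v n = 0)}.Infinite := by
      have h0 : {n | v n = 0}.Finite := hfin' 0
      have := h0.infinite_compl
      simpa [Set.compl_setOf] using this
    set φ := Nat.nth (fun n => ¬ (v n = 0)) with hφdef
    have hφmono : StrictMono φ := Nat.nth_strictMono hinf
    have hφmem : ∀ j, ¬ (v (φ j) = 0) := fun j => Nat.nth_mem_of_infinite hinf j
    set κ : ℕ → ℕ := fun j => v (φ j) - 1 with hκdef
    have hmem : ∀ j, x (φ j) ∈ KK (d (κ j)) := by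
      intro j
      rcases hv (φ j) with ⟨h0, _⟩ | ⟨k', hk', h⟩
      · exact absurd h0 (hφmem j)
      · have : κ j = k' := by simp only [hκdef]; omega
        rwa [this]
    have hκT : Tendsto κ atTop atTop := by
      refine tendsto_atTop.mpr (fun N => ?_)
      have h1 : Tendsto (fun j => v (φ j)) atTop atTop := hvT.comp hφmono.tendsto_atTop
      filter_upwards [h1.eventually_ge_atTop (N+1)] with j hj
      simp only [hκdef]
      omega
    choose t htS hteq using hmem
    obtain ⟨a, ha, ψ, hψ, hlim⟩ := master c hc hwf (fun j => d (κ j)) (fun j => hd (κ j))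
      (fun s => hκT.eventually (hev s)) t htS
    have ha' : a ∈ KK c ∪ ⋃ k, KK (d k) := by
      rcases ha with h | ⟨j, h⟩
      · exact Or.inl h
      · exact Or.inr (Set.mem_iUnion.mpr ⟨κ j, h⟩)
    refine ⟨a, ha', φ ∘ ψ, hφmono.comp hψ, ?_⟩
    have heq : (fun j => lab (d (κ (ψ j))) (t (ψ j))) = x ∘ (φ ∘ ψ) := by
      funext j; exact hteq (ψ j)
    rwa [heq] at hlim

/-! ### least points and sub-pieces -/

open Classical in
noncomputable def leastPt (P : Set ℚ) : ℚ :=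
  if h : ∃ n, eQ n ∈ P then eQ (Nat.find h) else 0

open Classical in
lemma leastPt_mem {P : Set ℚ} (h : P.Nonempty) : leastPt P ∈ P := by
  obtain ⟨q, hq⟩ := h
  have hex : ∃ n, eQ n ∈ P := ⟨eQ.symm q, by simpa using hq⟩
  rw [leastPt, dif_pos hex]
  exact Nat.find_spec hex

open Classical in
lemma leastPt_le {P : Set ℚ} {q : ℚ} (hq : q ∈ P) : eQ.symm (leastPt P) ≤ eQ.symm q := by
  have hex : ∃ n, eQ n ∈ P := ⟨eQ.symm q, by simpa using hq⟩
  rw [leastPt, dif_pos hex, Equiv.symm_apply_apply]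
  exact Nat.find_min' hex (by simpa using hq)

lemma leastPt_lt {P' P : Set ℚ} (hsub : P' ⊆ P) (hne : P'.Nonempty)
    (hnot : leastPt P ∉ P') : eQ.symm (leastPt P) < eQ.symm (leastPt P') := by
  have h1 : eQ.symm (leastPt P) ≤ eQ.symm (leastPt P') := leastPt_le (hsub (leastPt_mem hne))
  rcases lt_or_eq_of_le h1 with h | h
  · exact h
  · exfalso
    apply hnot
    have : leastPt P = leastPt P' := by
      have := congrArg eQ h
      simpa using this
    rw [this]
    exact leastPt_mem hne

noncomputable def cutq (B : ℚ) (n k : ℕ) : ℚ := B * (2⁻¹:ℚ)^(n+1) * (1 + (k:ℚ)/4)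
noncomputable def cutR (B : ℚ) (n k : ℕ) : ℝ := ((cutq B n k : ℚ) : ℝ) * Real.sqrt 2

noncomputable def wR (p : ℚ) (sd : ℕ) (x : ℚ) : ℝ :=
  if sd = 0 then (x:ℝ) - (p:ℝ) else (p:ℝ) - (x:ℝ)

def subPiece (P : Set ℚ) (p B : ℚ) (m : ℕ) : Set ℚ :=
  {x ∈ P | cutR B (m/8) (m%8%4) < wR p (m%8/4) x ∧ wR p (m%8/4) x ≤ cutR B (m/8) (m%8%4+1)}

lemma cutq_pos {B : ℚ} (hB : 0 < B) (n k : ℕ) : 0 < cutq B n k := by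
  unfold cutq; positivity

lemma cutR_pos {B : ℚ} (hB : 0 < B) (n k : ℕ) : 0 < cutR B n k := by
  unfold cutR
  have h1 : (0:ℝ) < Real.sqrt 2 := Real.sqrt_pos.mpr (by norm_num)
  have h2 : (0:ℝ) < ((cutq B n k : ℚ) : ℝ) := by exact_mod_cast cutq_pos hB n k
  positivity

lemma cutR_irrational {B : ℚ} (hB : 0 < B) (n k : ℕ) : Irrational (cutR B n k) := by
  unfold cutR
  exact irrational_sqrt_two.ratCast_mul (ne_of_gt (cutq_pos hB n k))

lemma sqrt_two_lt_two : Real.sqrt 2 < 2 := by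
  nlinarith [Real.sq_sqrt (show (0:ℝ) ≤ 2 by norm_num),
    Real.sqrt_nonneg (2:ℝ)]

lemma one_lt_sqrt_two : (1:ℝ) < Real.sqrt 2 := by
  nlinarith [Real.sq_sqrt (show (0:ℝ) ≤ 2 by norm_num), Real.sqrt_nonneg (2:ℝ)]

lemma rat_cast_isometry : Isometry (fun q : ℚ => (q : ℝ)) := by
  intro a b
  rw [edist_dist, edist_dist]
  simp [Rat.dist_cast]

lemma subPiece_compact {P : Set ℚ} (hP : IsCompact P) {p B : ℚ} (hB : 0 < B) (m : ℕ) :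
    IsCompact (subPiece P p B m) := by
  have hEq : subPiece P p B m
      = P ∩ ((fun x : ℚ => wR p (m%8/4) x) ⁻¹'
          (Set.Icc (cutR B (m/8) (m%8%4)) (cutR B (m/8) (m%8%4+1)))) := by
    ext x
    simp only [subPiece, Set.mem_inter_iff, Set.mem_setOf_eq, Set.mem_preimage, Set.mem_Icc]
    constructor
    · rintro ⟨h1, h2, h3⟩
      exact ⟨h1, h2.le, h3⟩
    · rintro ⟨h1, h2, h3⟩
      refine ⟨h1, lt_of_le_of_ne h2 ?_, h3⟩
      intro habs
      apply (cutR_irrational hB (m/8) (m%8%4)).ne_rat (if m%8/4 = 0 then x - p else p - x)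
      rw [habs]
      unfold wR
      split <;> push_cast <;> ring
    
  rw [hEq]
  refine hP.inter_right ?_
  refine IsClosed.preimage ?_ isClosed_Icc
  unfold wR
  split
  · exact (rat_cast_isometry.continuous).sub continuous_const
  · exact continuous_const.sub (rat_cast_isometry.continuous)

lemma subPiece_subset {P : Set ℚ} {p B : ℚ} {m : ℕ} : subPiece P p B m ⊆ P :=
  fun _ h => h.1

lemma center_not_mem_subPiece {P : Set ℚ} {p B : ℚ} (hB : 0 < B) {m : ℕ} :
    p ∉ subPiece P p B m := by
  rintro ⟨_, h2, _⟩
  have h3 : wR p (m%8/4) p = 0 := by unfold wR; split <;> ring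
  rw [h3] at h2
  exact absurd h2 (not_lt.mpr (cutR_pos hB _ _).le)

lemma abs_cast_rat (x : ℚ) : |((x:ℚ):ℝ)| = ((|x| : ℚ) : ℝ) := by
  push_cast
  rfl

lemma subPiece_disp {P : Set ℚ} {p B : ℚ} (hB : 0 < B) {m : ℕ} {x : ℚ}
    (hx : x ∈ subPiece P p B m) : |x - p| ≤ 2 * Dq m * B := by
  obtain ⟨_, h2, h3⟩ := hx
  have hw : |(x:ℝ) - (p:ℝ)| = wR p (m%8/4) x := by
    by_cases hsd : m%8/4 = 0
    · simp only [wR, if_pos hsd] at h2 ⊢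
      exact abs_of_pos (lt_trans (cutR_pos hB _ _) h2)
    · simp only [wR, if_neg hsd] at h2 ⊢
      rw [abs_of_neg (by linarith [lt_trans (cutR_pos hB _ _) h2])]
      ring
  have hcutq : cutq B (m/8) (m%8%4+1) ≤ B * (2⁻¹:ℚ)^(m/8) := by
    unfold cutq
    have h4 : m%8%4 < 4 := Nat.mod_lt _ (by norm_num)
    have hk : ((m%8%4 : ℕ) : ℚ) + 1 ≤ 4 := by
      have : ((m%8%4 : ℕ) : ℚ) ≤ 3 := by exact_mod_cast Nat.lt_succ_iff.mp h4
      linarith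
    have hB2 : (0:ℚ) < B * (2⁻¹:ℚ)^(m/8+1) := by positivity
    have h5 : (1 + ((m%8%4+1 : ℕ):ℚ)/4) ≤ 2 := by push_cast; linarith
    calc B * (2⁻¹:ℚ)^(m/8+1) * (1 + ((m%8%4+1:ℕ):ℚ)/4)
        ≤ B * (2⁻¹:ℚ)^(m/8+1) * 2 := by nlinarith
      _ = B * (2⁻¹:ℚ)^(m/8) := by rw [pow_succ]; ring
  have hcut : cutR B (m/8) (m%8%4+1) ≤ ((2 * Dq m * B : ℚ) : ℝ) := by
    unfold cutR
    have h6 : ((cutq B (m/8) (m%8%4+1) : ℚ):ℝ) ≤ ((B * (2⁻¹:ℚ)^(m/8) : ℚ):ℝ) := by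
      exact_mod_cast hcutq
    have h7 : (0:ℝ) ≤ ((cutq B (m/8) (m%8%4+1) : ℚ):ℝ) :=
      le_of_lt (by exact_mod_cast cutq_pos hB _ _)
    have h8 : ((2 * Dq m * B : ℚ):ℝ) = 2 * ((B * (2⁻¹:ℚ)^(m/8) : ℚ):ℝ) := by
      unfold Dq; push_cast; ring
    rw [h8]
    nlinarith [sqrt_two_lt_two, Real.sqrt_nonneg (2:ℝ)]
  have final : |(x:ℝ) - (p:ℝ)| ≤ ((2 * Dq m * B : ℚ) : ℝ) := by
    rw [hw]; exact h3.trans hcut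
  have hfin : ((|x - p| : ℚ) : ℝ) ≤ ((2 * Dq m * B : ℚ) : ℝ) := by
    rw [Rat.cast_abs, Rat.cast_sub]; exact final
  exact_mod_cast hfin

lemma subPiece_spread {P : Set ℚ} {p B : ℚ} (hB : 0 < B) {m : ℕ} {x x' : ℚ}
    (hx : x ∈ subPiece P p B m) (hx' : x' ∈ subPiece P p B m) :
    |x - x'| ≤ 2⁻¹ * Dq m * B := by
  obtain ⟨_, h2, h3⟩ := hx
  obtain ⟨_, h2', h3'⟩ := hx'
  have hdiff : |(x:ℝ) - (x':ℝ)| ≤ cutR B (m/8) (m%8%4+1) - cutR B (m/8) (m%8%4) := by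
    by_cases hsd : m%8/4 = 0
    · simp only [wR, if_pos hsd] at h2 h3 h2' h3'
      rw [abs_le]
      constructor <;> linarith
    · simp only [wR, if_neg hsd] at h2 h3 h2' h3'
      rw [abs_le]
      constructor <;> linarith
  have hcutdiff : cutR B (m/8) (m%8%4+1) - cutR B (m/8) (m%8%4)
      = ((B * (2⁻¹:ℚ)^(m/8+1) / 4 : ℚ):ℝ) * Real.sqrt 2 := by
    unfold cutR cutq
    push_cast
    ring
  have hle : ((B * (2⁻¹:ℚ)^(m/8+1) / 4 : ℚ):ℝ) * Real.sqrt 2 ≤ ((2⁻¹ * Dq m * B : ℚ):ℝ) := by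
    have h9 : ((2⁻¹ * Dq m * B : ℚ):ℝ) = 4 * ((B * (2⁻¹:ℚ)^(m/8+1) / 4 : ℚ):ℝ) := by
      unfold Dq
      push_cast
      rw [pow_succ]
      ring
    have h10 : (0:ℝ) < ((B * (2⁻¹:ℚ)^(m/8+1) / 4 : ℚ):ℝ) := by
      have : (0:ℚ) < B * (2⁻¹:ℚ)^(m/8+1) / 4 := by positivity
      exact_mod_cast this
    rw [h9]
    nlinarith [sqrt_two_lt_two]
  have hfin : ((|x - x'| : ℚ) : ℝ) ≤ ((2⁻¹ * Dq m * B : ℚ) : ℝ) := by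
    rw [Rat.cast_abs, Rat.cast_sub]
    calc |(x:ℝ) - (x':ℝ)| ≤ _ := hdiff
      _ = _ := hcutdiff
      _ ≤ _ := hle
  exact_mod_cast hfin

lemma subPiece_cover {P : Set ℚ} {p B : ℚ} (hB : 0 < B) {x : ℚ} (hx : x ∈ P)
    (hne : x ≠ p) (hclose : |x - p| ≤ B) : ∃ m, x ∈ subPiece P p B m := by
  set w : ℝ := |(x:ℝ) - (p:ℝ)| with hwdef
  have hw0 : 0 < w := by
    rw [hwdef]
    have h : (x:ℝ) ≠ (p:ℝ) := by exact_mod_cast hne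
    exact abs_pos.mpr (sub_ne_zero.mpr h)
  have hwB : w ≤ (B:ℝ) := by
    rw [hwdef]
    have : ((|x - p| : ℚ) : ℝ) ≤ ((B:ℚ):ℝ) := by exact_mod_cast hclose
    rw [Rat.cast_abs, Rat.cast_sub] at this
    exact this
  have hB' : (0:ℝ) < (B:ℝ) := by exact_mod_cast hB
  -- r_n = cutR B n 4 = √2 B 2⁻¹^n
  have hr : ∀ n : ℕ, cutR B n 4 = ((B * (2⁻¹:ℚ)^n : ℚ):ℝ) * Real.sqrt 2 := by
    intro n
    unfold cutR cutq
    push_cast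
    rw [pow_succ]
    ring
  have hr0 : ∀ n : ℕ, cutR B n 0 = cutR B (n+1) 4 := by
    intro n
    rw [hr (n+1)]
    unfold cutR cutq
    push_cast
    rw [pow_succ]
    ring
  have hex : ∃ n : ℕ, cutR B n 4 < w := by
    obtain ⟨n, hn⟩ := exists_pow_lt_of_lt_one
      (show (0:ℝ) < w / ((B:ℝ) * 2) by positivity) (show (2⁻¹:ℝ) < 1 by norm_num)
    refine ⟨n, ?_⟩
    rw [hr n]
    have hcast : ((B * (2⁻¹:ℚ)^n : ℚ):ℝ) = (B:ℝ) * (2⁻¹:ℝ)^n := by push_cast; ring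
    rw [hcast]
    calc (B:ℝ) * (2⁻¹:ℝ)^n * Real.sqrt 2 < (B:ℝ) * (w / ((B:ℝ)*2)) * 2 := by
          have h2 : (0:ℝ) < Real.sqrt 2 := Real.sqrt_pos.mpr (by norm_num)
          nlinarith [sqrt_two_lt_two, pow_pos (show (0:ℝ) < 2⁻¹ by norm_num) n,
            mul_pos hB' (pow_pos (show (0:ℝ) < 2⁻¹ by norm_num) n)]
      _ = w := by field_simp
  classical
  set N := Nat.find hex with hN
  have hNspec : cutR B N 4 < w := Nat.find_spec hex
  have hN1 : N ≠ 0 := by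
    intro h0
    have : cutR B 0 4 < w := by rw [← h0]; exact hNspec
    rw [hr 0] at this
    simp only [pow_zero, mul_one] at this
    nlinarith [one_lt_sqrt_two]
  set n := N - 1 with hn
  have hNn : N = n + 1 := by omega
  have hupper : w ≤ cutR B n 4 := by
    by_contra h
    exact (Nat.find_min hex (show n < N by omega)) (not_le.mp h)
  have hlower : cutR B n 0 < w := by rw [hr0 n, ← hNn]; exact hNspec
  -- find k
  have hexk : ∃ k : ℕ, w ≤ cutR B n (k+1) ∧ k ≤ 3 := ⟨3, hupper, le_refl 3⟩
  have hexk' : ∃ k : ℕ, w ≤ cutR B n (k+1) := ⟨3, hupper⟩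
  set k := Nat.find hexk' with hk
  have hk3 : k ≤ 3 := Nat.find_min' hexk' hupper
  have hkspec : w ≤ cutR B n (k+1) := Nat.find_spec hexk'
  have hklower : cutR B n k < w := by
    rcases Nat.eq_zero_or_pos k with h0 | hpos
    · rw [h0]; exact hlower
    · have := Nat.find_min hexk' (show k - 1 < k by omega)
      have h2 : ¬ w ≤ cutR B n (k-1+1) := this
      have h3 : k - 1 + 1 = k := by omega
      rw [h3] at h2
      exact not_le.mp h2
  -- side
  have hxp : (x:ℝ) ≠ (p:ℝ) := by exact_mod_cast hne
  rcases lt_or_gt_of_ne hxp with hlt | hgt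
  · -- x < p : left side, sd = 1
    refine ⟨8*n + (4*1 + k), ?_⟩
    have hd1 : (8*n + (4*1+k)) / 8 = n := by omega
    have hd2 : (8*n + (4*1+k)) % 8 / 4 = 1 := by omega
    have hd3 : (8*n + (4*1+k)) % 8 % 4 = k := by omega
    refine ⟨hx, ?_, ?_⟩ <;> rw [hd1, hd2, hd3] <;> simp only [wR, if_neg (by norm_num : (1:ℕ) ≠ 0)]
    · have : w = (p:ℝ) - (x:ℝ) := by rw [hwdef, abs_of_neg (by linarith)]; ring
      rw [← this]; exact hklower
    · have : w = (p:ℝ) - (x:ℝ) := by rw [hwdef, abs_of_neg (by linarith)]; ring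
      rw [← this]; exact hkspec
  · -- x > p : right side, sd = 0
    refine ⟨8*n + (4*0 + k), ?_⟩
    have hd1 : (8*n + (4*0+k)) / 8 = n := by omega
    have hd2 : (8*n + (4*0+k)) % 8 / 4 = 0 := by omega
    have hd3 : (8*n + (4*0+k)) % 8 % 4 = k := by omega
    refine ⟨hx, ?_, ?_⟩ <;> rw [hd1, hd2, hd3] <;> simp only [wR, if_pos rfl]
    · have : w = (x:ℝ) - (p:ℝ) := by rw [hwdef, abs_of_pos (by linarith)]
      rw [← this]; exact hklower
    · have : w = (x:ℝ) - (p:ℝ) := by rw [hwdef, abs_of_pos (by linarith)]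
      rw [← this]; exact hkspec

/-! ### the capture code of a compact set -/

noncomputable def BvalAux (B0 : ℚ) : Lst → ℚ
  | [] => B0
  | m :: s => 2⁻¹ * Dq m * BvalAux B0 s

noncomputable def pieceAux (K : Set ℚ) (B0 : ℚ) : Lst → Set ℚ
  | [] => K
  | m :: s => subPiece (pieceAux K B0 s) (leastPt (pieceAux K B0 s)) (BvalAux B0 s) m

open Classical in
noncomputable def capCode (K : Set ℚ) (B0 : ℚ) : Code :=
  (fun s => eQ.symm (leastPt (pieceAux K B0 s.reverse)),
   fun s => eQ.symm (BvalAux B0 s.reverse),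
   fun s => if (pieceAux K B0 s.reverse).Nonempty then true else false)

section Capture

variable {K : Set ℚ} {B0 : ℚ}

lemma BvalAux_pos (hB0 : 0 < B0) (s : Lst) : 0 < BvalAux B0 s := by
  induction s with
  | nil => exact hB0
  | cons m s ih =>
      have := Dq_pos m
      unfold BvalAux
      positivity

lemma pieceAux_compact (hK : IsCompact K) (hB0 : 0 < B0) (s : Lst) :
    IsCompact (pieceAux K B0 s) := by
  induction s with
  | nil => exact hK
  | cons m s ih => exact subPiece_compact ih (BvalAux_pos hB0 s) m

lemma pieceAux_cons_subset {m : ℕ} {s : Lst} : pieceAux K B0 (m :: s) ⊆ pieceAux K B0 s :=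
  subPiece_subset

lemma pieceAux_append_subset (w s : Lst) : pieceAux K B0 (w ++ s) ⊆ pieceAux K B0 s := by
  induction w with
  | nil => exact fun x h => h
  | cons a w ih => exact fun x h => ih (pieceAux_cons_subset h)

lemma lab_capCode (s : Lst) : lab (capCode K B0) s = leastPt (pieceAux K B0 s.reverse) := by
  unfold lab capCode; simp

lemma bv_capCode (s : Lst) : bv (capCode K B0) s = BvalAux B0 s.reverse := by
  unfold bv capCode; simp

lemma Tt_capCode (s : Lst) :
    Tt (capCode K B0) s = true ↔ (pieceAux K B0 s.reverse).Nonempty := by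
  unfold Tt capCode
  simp only []
  split <;> simp_all

lemma inS_capCode_of_mem {s : Lst} {x : ℚ} (hx : x ∈ pieceAux K B0 s) :
    inS (capCode K B0) s.reverse := by
  intro t ht
  rw [Tt_capCode]
  have h1 : t.reverse <:+ s := by
    have h2 := (List.reverse_suffix).mpr ht
    rwa [List.reverse_reverse] at h2
  obtain ⟨w, hw⟩ := h1
  refine ⟨x, ?_⟩
  have : pieceAux K B0 s ⊆ pieceAux K B0 t.reverse.reverse.reverse := by
    rw [List.reverse_reverse]
    rw [← hw]
    exact pieceAux_append_subset w t.reverse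
  simpa using this hx

lemma conds_capCode (hK : IsCompact K) (hB0 : 0 < B0) : conds (capCode K B0) := by
  constructor
  · rw [bv_capCode]
    exact (BvalAux_pos hB0 _).le
  · intro s n hin
    have hne : (pieceAux K B0 (s ++ [n]).reverse).Nonempty := by
      rw [← Tt_capCode]
      exact hin _ (List.prefix_refl _)
    have hrev : (s ++ [n]).reverse = n :: s.reverse := by simp
    rw [hrev] at hne
    simp only [lab_capCode, bv_capCode, hrev]
    have hchild : pieceAux K B0 (n :: s.reverse)
        = subPiece (pieceAux K B0 s.reverse) (leastPt (pieceAux K B0 s.reverse))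
            (BvalAux B0 s.reverse) n := rfl
    have hBpos := BvalAux_pos hB0 s.reverse
    refine ⟨?_, (BvalAux_pos hB0 _).le, le_of_eq rfl⟩
    have hmem : leastPt (pieceAux K B0 (n :: s.reverse)) ∈ pieceAux K B0 (n :: s.reverse) :=
      leastPt_mem hne
    rw [hchild] at hmem
    exact subPiece_disp hBpos hmem

lemma wf_capCode (hK : IsCompact K) (hB0 : 0 < B0) : ¬ illf (capCode K B0) := by
  rintro ⟨y, hy⟩
  set P : ℕ → Set ℚ := fun n => pieceAux K B0 (pfx y n).reverse with hP
  have hnoneempty : ∀ n, (P n).Nonempty := by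
    intro n
    rw [← Tt_capCode]
    exact hy n
  have hrevsucc : ∀ n, (pfx y (n+1)).reverse = y n :: (pfx y n).reverse := by
    intro n
    rw [pfx_succ]
    simp
  have hnested : ∀ n, P (n+1) ⊆ P n := by
    intro n
    simp only [hP, hrevsucc n]
    exact pieceAux_cons_subset
  have hcpt : ∀ n, IsCompact (P n) := fun n => pieceAux_compact hK hB0 _
  have hclosed : ∀ n, IsClosed (P n) := fun n => (hcpt n).isClosed
  obtain ⟨x, hx⟩ := IsCompact.nonempty_iInter_of_sequence_nonempty_isCompact_isClosed
    P hnested hnoneempty (hcpt 0) hclosed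
  have hstrict : StrictMono (fun n => eQ.symm (leastPt (P n))) := by
    have hstep : ∀ n, eQ.symm (leastPt (P n)) < eQ.symm (leastPt (P (n+1))) := by
      intro n
      refine leastPt_lt (hnested n) (hnoneempty (n+1)) ?_
      simp only [hP, hrevsucc n]
      exact center_not_mem_subPiece (BvalAux_pos hB0 _)
    exact strictMono_nat_of_lt_succ hstep
  have hbound : ∀ n, eQ.symm (leastPt (P n)) ≤ eQ.symm x := by
    intro n
    exact leastPt_le (by exact Set.mem_iInter.mp hx n)
  have h1 : ∀ n, n ≤ eQ.symm (leastPt (P n)) := fun n => hstrict.le_apply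
  have := h1 (eQ.symm x + 1)
  have := hbound (eQ.symm x + 1)
  omega

lemma invariant_capCode (hB0 : 0 < B0)
    (hbase : ∀ x ∈ K, |x - leastPt K| ≤ B0) :
    ∀ s, ∀ x ∈ pieceAux K B0 s, |x - leastPt (pieceAux K B0 s)| ≤ BvalAux B0 s := by
  intro s
  induction s with
  | nil => exact hbase
  | cons m s ih =>
      intro x hx
      have hne : (pieceAux K B0 (m :: s)).Nonempty := ⟨x, hx⟩
      have hℓ : leastPt (pieceAux K B0 (m :: s)) ∈ pieceAux K B0 (m :: s) := leastPt_mem hne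
      have := subPiece_spread (BvalAux_pos hB0 s) hx hℓ
      exact this

lemma capture_mem (hK : IsCompact K) (hB0 : 0 < B0)
    (hbase : ∀ x ∈ K, |x - leastPt K| ≤ B0) :
    ∀ x ∈ K, x ∈ KK (capCode K B0) := by
  intro x hx
  -- strong induction on the measure d = eQ.symm x - eQ.symm (leastPt (pieceAux s))
  suffices h : ∀ d : ℕ, ∀ s : Lst, x ∈ pieceAux K B0 s →
      eQ.symm x - eQ.symm (leastPt (pieceAux K B0 s)) = d → x ∈ KK (capCode K B0) by
    exact h _ [] hx rfl
  intro d
  induction d using Nat.strong_induction_on with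
  | _ d IH =>
      intro s hxs hd
      by_cases hxl : x = leastPt (pieceAux K B0 s)
      · refine ⟨s.reverse, inS_capCode_of_mem hxs, ?_⟩
        rw [lab_capCode, List.reverse_reverse, ← hxl]
      · have hinv := invariant_capCode hB0 hbase s x hxs
        obtain ⟨m, hm⟩ := subPiece_cover (BvalAux_pos hB0 s) hxs hxl hinv
        have hxchild : x ∈ pieceAux K B0 (m :: s) := hm
        have hchildne : (pieceAux K B0 (m :: s)).Nonempty := ⟨x, hxchild⟩
        have hlt : eQ.symm (leastPt (pieceAux K B0 s)) < eQ.symm (leastPt (pieceAux K B0 (m :: s))) :=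
          leastPt_lt pieceAux_cons_subset hchildne
            (center_not_mem_subPiece (BvalAux_pos hB0 s))
        have hle : eQ.symm (leastPt (pieceAux K B0 (m :: s))) ≤ eQ.symm x :=
          leastPt_le hxchild
        have hle2 : eQ.symm (leastPt (pieceAux K B0 s)) ≤ eQ.symm x :=
          leastPt_le hxs
        exact IH (eQ.symm x - eQ.symm (leastPt (pieceAux K B0 (m :: s))))
          (by omega) (m :: s) hxchild rfl

end Capture

/-- Every compact subset of ℚ is contained in the label set of a valid well-founded code. -/
lemma capture {K : Set ℚ} (hK : IsCompact K) :
    ∃ c : Code, conds c ∧ ¬ illf c ∧ K ⊆ KK c := by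
  rcases Set.eq_empty_or_nonempty K with rfl | hne
  · refine ⟨qcode ∅, conds_qcode ∅, ?_, by simp⟩
    rw [illf_qcode]
    rintro ⟨y, hy⟩
    simpa using hy 0
  · -- bound
    obtain ⟨C, hC⟩ := (Metric.isBounded_iff).mp hK.isBounded
    obtain ⟨B0, hB0C, hB0pos⟩ : ∃ B0 : ℚ, (C:ℝ) ≤ (B0:ℝ) ∧ 0 < B0 := by
      obtain ⟨B0, hB0⟩ := exists_rat_gt (max C 0)
      exact ⟨B0, by
        have := le_max_left C 0
        linarith, by
        have h1 := le_max_right C 0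
        have h2 : (0:ℝ) < (B0:ℝ) := lt_of_le_of_lt h1 hB0
        exact_mod_cast h2⟩
    have hbase : ∀ x ∈ K, |x - leastPt K| ≤ B0 := by
      intro x hx
      have h1 : dist x (leastPt K) ≤ C := hC hx (leastPt_mem hne)
      rw [Rat.dist_eq] at h1
      have h2 : |((x - leastPt K : ℚ) : ℝ)| ≤ (B0:ℝ) := by
        push_cast
        linarith
      rw [← Rat.cast_abs] at h2
      exact_mod_cast h2
    exact ⟨capCode K B0, conds_capCode hK hB0pos, wf_capCode hK hB0pos,
      capture_mem hK hB0pos hbase⟩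

/-! ### topology of the code space -/

lemma eventually_eq_of_continuous_discrete {Z Y : Type*} [TopologicalSpace Z]
    [TopologicalSpace Y] [DiscreteTopology Y] {g : Z → Y} (hg : Continuous g) (z₀ : Z) :
    ∀ᶠ z in 𝓝 z₀, g z = g z₀ := by
  have h : Tendsto g (𝓝 z₀) (𝓝 (g z₀)) := hg.continuousAt
  rw [nhds_discrete Y] at h
  exact tendsto_pure.mp h

lemma ev_agree {d : ℕ → Code} {c : Code} (hd : Tendsto d atTop (𝓝 c)) (s : Lst) :
    ∀ᶠ k in atTop, agree (d k) c s := by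
  have h1 : Tendsto (fun k => (d k).1 s) atTop (𝓝 (c.1 s)) :=
    (((continuous_apply s).comp continuous_fst).tendsto c).comp hd
  have h2 : Tendsto (fun k => (d k).2.1 s) atTop (𝓝 (c.2.1 s)) :=
    (((continuous_apply s).comp (continuous_fst.comp continuous_snd)).tendsto c).comp hd
  have h3 : Tendsto (fun k => (d k).2.2 s) atTop (𝓝 (c.2.2 s)) :=
    (((continuous_apply s).comp (continuous_snd.comp continuous_snd)).tendsto c).comp hd
  rw [nhds_discrete, tendsto_pure] at h1 h2 h3
  filter_upwards [h1, h2, h3] with k hk1 hk2 hk3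
  exact ⟨hk1, hk2, hk3⟩

lemma isOpen_inS_set (u : Lst) : IsOpen {c : Code | inS c u} ∧ IsClosed {c : Code | inS c u} := by
  have hEq : {c : Code | inS c u}
      = ⋂ i ∈ Finset.range (u.length + 1), {c : Code | c.2.2 (u.take i) = true} := by
    ext c
    simp only [Set.mem_setOf_eq, Set.mem_iInter, Finset.mem_range]
    constructor
    · intro h i hi
      exact h (u.take i) (List.take_prefix i u)
    · intro h t ht
      have h1 : t = u.take t.length := List.prefix_iff_eq_take.mp ht
      have h2 : t.length < u.length + 1 := Nat.lt_succ_iff.mpr ht.length_le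
      rw [Tt] at *
      rw [h1]
      exact h t.length h2
  have hco : ∀ i, IsOpen {c : Code | c.2.2 (u.take i) = true}
      ∧ IsClosed {c : Code | c.2.2 (u.take i) = true} := by
    intro i
    have hcont : Continuous (fun c : Code => c.2.2 (u.take i)) :=
      (continuous_apply (u.take i)).comp (continuous_snd.comp continuous_snd)
    have hpre : {c : Code | c.2.2 (u.take i) = true}
        = (fun c : Code => c.2.2 (u.take i)) ⁻¹' {true} := rfl
    constructor
    · rw [hpre]; exact (isOpen_discrete _).preimage hcont
    · rw [hpre]; exact (isClosed_discrete _).preimage hcont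
  rw [hEq]
  constructor
  · exact isOpen_biInter_finset (fun i _ => (hco i).1)
  · exact isClosed_biInter (fun i _ => (hco i).2)

lemma isClosed_conds : IsClosed {c : Code | conds c} := by
  have hEq : {c : Code | conds c}
      = {c : Code | 0 ≤ bv c []} ∩ ⋂ (s : Lst) (n : ℕ),
          ({c : Code | inS c (s ++ [n])}ᶜ ∪
            {c : Code | |lab c (s ++ [n]) - lab c s| ≤ 2 * Dq n * bv c s ∧
              0 ≤ bv c (s ++ [n]) ∧ bv c (s ++ [n]) ≤ 2⁻¹ * Dq n * bv c s}) := by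
    ext c
    simp only [conds, Set.mem_inter_iff, Set.mem_setOf_eq, Set.mem_iInter, Set.mem_union,
      Set.mem_compl_iff]
    constructor
    · rintro ⟨h0, h1⟩
      refine ⟨h0, fun s n => ?_⟩
      by_cases h : inS c (s ++ [n])
      · exact Or.inr (h1 s n h)
      · exact Or.inl h
    · rintro ⟨h0, h1⟩
      refine ⟨h0, fun s n hin => ?_⟩
      rcases h1 s n with h | h
      · exact absurd hin h
      · exact h
  rw [hEq]
  have hbv0 : IsClosed {c : Code | 0 ≤ bv c []} := by
    have : {c : Code | 0 ≤ bv c []} = (fun c : Code => c.2.1 []) ⁻¹' {k : ℕ | 0 ≤ eQ k} := rfl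
    rw [this]
    exact (isClosed_discrete _).preimage
      ((continuous_apply ([] : Lst)).comp (continuous_fst.comp continuous_snd))
  refine hbv0.inter (isClosed_iInter fun s => isClosed_iInter fun n => ?_)
  refine IsClosed.union (isOpen_inS_set (s ++ [n])).1.isClosed_compl ?_
  have : {c : Code | |lab c (s ++ [n]) - lab c s| ≤ 2 * Dq n * bv c s ∧
        0 ≤ bv c (s ++ [n]) ∧ bv c (s ++ [n]) ≤ 2⁻¹ * Dq n * bv c s}
      = (fun c : Code => (c.1 (s ++ [n]), c.1 s, c.2.1 (s ++ [n]), c.2.1 s)) ⁻¹'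
        {v : ℕ × ℕ × ℕ × ℕ | |eQ v.1 - eQ v.2.1| ≤ 2 * Dq n * eQ v.2.2.2 ∧
          0 ≤ eQ v.2.2.1 ∧ eQ v.2.2.1 ≤ 2⁻¹ * Dq n * eQ v.2.2.2} := rfl
  rw [this]
  refine (isClosed_discrete _).preimage ?_
  refine Continuous.prodMk ?_ (Continuous.prodMk ?_ (Continuous.prodMk ?_ ?_))
  · exact (continuous_apply _).comp continuous_fst
  · exact (continuous_apply _).comp continuous_fst
  · exact (continuous_apply _).comp (continuous_fst.comp continuous_snd)
  · exact (continuous_apply _).comp (continuous_fst.comp continuous_snd)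

lemma pfx_congr {y y' : ℕ → ℕ} {n : ℕ} (h : ∀ i < n, y i = y' i) : pfx y n = pfx y' n := by
  unfold pfx
  refine List.map_congr_left (fun i hi => h i (by simpa using hi))

lemma continuous_branch_eval {X : Type*} [TopologicalSpace X] (n : ℕ) :
    Continuous (fun z : (Code × X) × (ℕ → ℕ) => z.1.1.2.2 (pfx z.2 n)) := by
  set F := fun z : (Code × X) × (ℕ → ℕ) => z.1.1.2.2 (pfx z.2 n) with hF
  have hev : ∀ z₀, ∀ᶠ z in 𝓝 z₀, F z = F z₀ := by
    intro z₀
    have hcoord : ∀ i, ∀ᶠ z in 𝓝 z₀, z.2 i = z₀.2 i := by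
      intro i
      exact eventually_eq_of_continuous_discrete
        ((continuous_apply i).comp continuous_snd) z₀
    have hall : ∀ᶠ z in 𝓝 z₀, ∀ i ∈ Finset.range n, z.2 i = z₀.2 i :=
      (eventually_all_finset (Finset.range n)).mpr (fun i _ => hcoord i)
    have hTl : ∀ᶠ z in 𝓝 z₀, z.1.1.2.2 (pfx z₀.2 n) = z₀.1.1.2.2 (pfx z₀.2 n) :=
      eventually_eq_of_continuous_discrete
        ((continuous_apply (pfx z₀.2 n)).comp
          (continuous_snd.comp (continuous_snd.comp (continuous_fst.comp continuous_fst)))) z₀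
    filter_upwards [hall, hTl] with z hz1 hz2
    have : pfx z.2 n = pfx z₀.2 n := pfx_congr (fun i hi => hz1 i (by simpa using hi))
    rw [hF]
    simp only []
    rw [this, hz2]
  refine continuous_def.mpr (fun U _ => ?_)
  refine isOpen_iff_mem_nhds.mpr (fun z₀ hz₀ => ?_)
  filter_upwards [hev z₀] with z hz
  rw [Set.mem_preimage, hz]
  exact hz₀

lemma analyticSet_union {α : Type*} [TopologicalSpace α] {s t : Set α}
    (hs : MeasureTheory.AnalyticSet s) (ht : MeasureTheory.AnalyticSet t) :
    MeasureTheory.AnalyticSet (s ∪ t) := by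
  have : s ∪ t = ⋃ b : Bool, (bif b then s else t) := by
    ext x
    simp [Set.mem_iUnion, Bool.exists_bool, or_comm]
  rw [this]
  exact MeasureTheory.AnalyticSet.iUnion (fun b => by cases b <;> simpa)

/-! ### Direction A tools: cylinders, sigma-compact grid, hmap -/

def cyl (s : Lst) : Set (ℕ → ℕ) := {y | pfx y s.length = s}

lemma pfx_getElem {y : ℕ → ℕ} {n i : ℕ} (hi : i < (pfx y n).length) : (pfx y n)[i] = y i := by
  simp [pfx]

lemma cyl_nonempty (s : Lst) : (cyl s).Nonempty := by
  refine ⟨fun i => s.getD i 0, ?_⟩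
  show pfx (fun i => s.getD i 0) s.length = s
  refine List.ext_getElem (by rw [pfx_length]) (fun i h1 h2 => ?_)
  rw [pfx_getElem h1]
  exact (List.getD_eq_getElem s 0 h2)

lemma pfx_take (y : ℕ → ℕ) {m n : ℕ} (h : m ≤ n) : (pfx y n).take m = pfx y m := by
  unfold pfx
  rw [← List.map_take, List.take_range, Nat.min_eq_left h]

lemma cyl_mono {s t : Lst} (h : t <+: s) : cyl s ⊆ cyl t := by
  intro y hy
  have hy' : pfx y s.length = s := hy
  show pfx y t.length = t
  have h1 : t = s.take t.length := List.prefix_iff_eq_take.mp h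
  conv_rhs => rw [h1, ← hy']
  rw [pfx_take y h.length_le]

section QcptSection
variable {Z : Type*} [MetricSpace Z] [TopologicalSpace.SeparableSpace Z] [Nonempty Z]

noncomputable def Qcpt (v : ℕ → ℕ) : Set Z :=
  ⋂ k, ⋃ n ∈ Finset.range (v k + 1),
    Metric.closedBall (TopologicalSpace.denseSeq Z n) ((2⁻¹:ℝ)^k)

lemma Qcpt_mono {v v' : ℕ → ℕ} (h : ∀ n, v n ≤ v' n) : Qcpt (Z := Z) v ⊆ Qcpt v' := by
  intro z hz
  refine Set.mem_iInter.mpr (fun k => ?_)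
  have h1 := Set.mem_iInter.mp hz k
  simp only [Set.mem_iUnion] at h1 ⊢
  obtain ⟨n, hn, hb⟩ := h1
  refine ⟨n, ?_, hb⟩
  simp only [Finset.mem_range] at hn ⊢
  have := h k
  omega

lemma Qcpt_compact [CompleteSpace Z] (v : ℕ → ℕ) : IsCompact (Qcpt (Z := Z) v) := by
  rw [isCompact_iff_totallyBounded_isComplete]
  have hclosed : IsClosed (Qcpt (Z := Z) v) := by
    refine isClosed_iInter (fun k => ?_)
    refine Set.Finite.isClosed_biUnion (Finset.finite_toSet _) (fun n _ => ?_)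
    exact Metric.isClosed_closedBall
  constructor
  · rw [Metric.totallyBounded_iff]
    intro ε hε
    obtain ⟨k, hk⟩ := exists_pow_lt_of_lt_one hε (show (2⁻¹:ℝ) < 1 by norm_num)
    refine ⟨TopologicalSpace.denseSeq Z '' (Finset.range (v k + 1) : Set ℕ),
      Set.Finite.image _ (Finset.finite_toSet _), ?_⟩
    intro z hz
    have h1 := Set.mem_iInter.mp hz k
    simp only [Set.mem_iUnion] at h1
    obtain ⟨n, hn, hball⟩ := h1
    refine Set.mem_biUnion ⟨n, by simpa using hn, rfl⟩ ?_
    rw [Metric.mem_ball]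
    calc dist z (TopologicalSpace.denseSeq Z n) ≤ (2⁻¹:ℝ)^k := hball
      _ < ε := hk
  · exact hclosed.isComplete

lemma Qcpt_cover (z : Z) : ∃ v : ℕ → ℕ, z ∈ Qcpt (Z := Z) v := by
  have hd : DenseRange (TopologicalSpace.denseSeq Z) := TopologicalSpace.denseRange_denseSeq Z
  have hex : ∀ k : ℕ, ∃ n, dist z (TopologicalSpace.denseSeq Z n) ≤ (2⁻¹:ℝ)^k := by
    intro k
    have := hd.exists_dist_lt z (show (0:ℝ) < (2⁻¹:ℝ)^k by positivity)
    obtain ⟨n, hn⟩ := this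
    exact ⟨n, by rw [dist_comm] at hn ⊢; exact hn.le⟩
  choose v hv using hex
  refine ⟨v, Set.mem_iInter.mpr (fun k => ?_)⟩
  simp only [Set.mem_iUnion]
  exact ⟨v k, by simp, Metric.mem_closedBall.mpr (hv k)⟩


end QcptSection

/-! hmap : compacts of ℚ to ℕ→ℕ -/

noncomputable def hmap (K : Set ℚ) (n : ℕ) : ℕ := sSup {m | qlab (List.replicate m n) ∈ K}

lemma replicate_eq_pfx (m n : ℕ) : List.replicate m n = pfx (fun _ => n) m := by
  unfold pfx
  rw [List.map_const', List.length_range]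

lemma hmap_bdd {K : Set ℚ} (hK : IsCompact K) (n : ℕ) :
    BddAbove {m | qlab (List.replicate m n) ∈ K} := by
  by_contra h
  have hinf := Set.infinite_of_not_bddAbove h
  set φ := Nat.nth (fun m => qlab (List.replicate m n) ∈ K) with hφ
  refine no_aseq_seq_in_compact hK (fun _ => n) φ (Nat.nth_strictMono hinf) (fun j => ?_)
  have := Nat.nth_mem_of_infinite hinf j
  rwa [replicate_eq_pfx, qlab_pfx] at this

lemma hmap_mono {K K' : Set ℚ} (hK' : IsCompact K') (h : K ⊆ K') (n : ℕ) :
    hmap K n ≤ hmap K' n := by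
  unfold hmap
  rcases Set.eq_empty_or_nonempty {m | qlab (List.replicate m n) ∈ K} with he | hne
  · rw [he, csSup_empty]
    exact Nat.zero_le _
  · exact csSup_le_csSup (hmap_bdd hK' n) hne (fun m hm => h hm)

lemma hmap_ge {K : Set ℚ} (hK : IsCompact K) {m n : ℕ}
    (h : qlab (List.replicate m n) ∈ K) : m ≤ hmap K n :=
  le_csSup (hmap_bdd hK n) h

def SV (v : ℕ → ℕ) : Set Lst := {s | ∃ j, (∀ a ∈ s, a = j) ∧ s.length ≤ v j + 1}

lemma SV_prefix_closed (v : ℕ → ℕ) : ∀ {a b : Lst}, a <+: b → b ∈ SV v → a ∈ SV v := by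
  rintro a b hab ⟨j, hj, hlen⟩
  exact ⟨j, fun x hx => hj x (hab.sublist.subset hx), le_trans hab.length_le hlen⟩

lemma SV_wf (v : ℕ → ℕ) : ¬ illf (qcode (SV v)) := by
  rw [illf_qcode]
  rintro ⟨y, hy⟩
  obtain ⟨j, hj, hlen⟩ := hy (v (y 0) + 2)
  have h0 : y 0 ∈ pfx y (v (y 0) + 2) := by
    unfold pfx
    exact List.mem_map.mpr ⟨0, by simp, rfl⟩
  have := hj (y 0) h0
  rw [pfx_length, this] at hlen
  omega

lemma Kv_compact (v : ℕ → ℕ) : IsCompact (KK (qcode (SV v))) :=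
  cptKK (conds_qcode _) (SV_wf v)

lemma hmap_Kv_ge (v : ℕ → ℕ) (n : ℕ) : v n ≤ hmap (KK (qcode (SV v))) n := by
  refine hmap_ge (Kv_compact v) ?_
  refine ⟨List.replicate (v n) n, ?_, (lab_qcode _ _)⟩
  refine (inS_qcode (SV_prefix_closed v)).mpr ?_
  exact ⟨n, fun a ha => List.eq_of_mem_replicate ha, by simp⟩


lemma preimage_val_compact {Z : Type*} [TopologicalSpace Z] {A C : Set Z}
    (hC : IsCompact C) (hsub : C ⊆ A) : IsCompact ((Subtype.val : A → Z) ⁻¹' C) := by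
  rw [Subtype.isCompact_iff]
  have heq : Subtype.val '' ((Subtype.val : A → Z) ⁻¹' C) = C := by
    rw [Set.image_preimage_eq_inter_range, Subtype.range_coe_subtype]
    exact Set.inter_eq_self_of_subset_left (by simpa using hsub)
  rw [heq]
  exact hC

/-! ### Direction B : Tukey quotient implies Sigma-1-2 -/

universe u

noncomputable instance : PolishSpace ((Lst → ℕ) × (Lst → Bool)) := by
  haveI : TopologicalSpace.SeparableSpace (Lst → Bool) := inferInstance
  infer_instance
noncomputable instance : PolishSpace Code := inferInstance

set_option maxHeartbeats 1000000 in
lemma directionB {M : Type u} [TopologicalSpace M] [TopologicalSpace.MetrizableSpace M]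
    [TopologicalSpace.SeparableSpace M]
    (φ : {K : Set ℚ // IsCompact K} → {K : Set M // IsCompact K})
    (hφ : ∀ S : Set {K : Set ℚ // IsCompact K},
        (∀ K : Set ℚ, IsCompact K → ∃ C ∈ S, K ⊆ C.1) →
        ∀ x : M, ∃ C ∈ S, x ∈ (φ C).1) :
    ∃ (Z : Type u) (_ : TopologicalSpace Z), PolishSpace Z ∧
      ∃ A : Set Z, MeasureTheory.AnalyticSet Aᶜ ∧
        ∃ f : A → M, Continuous f ∧ Function.Surjective f := by
  classical
  letI : MetricSpace M := TopologicalSpace.metrizableSpaceMetric M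
  set ι : M → UniformSpace.Completion M := (↑·) with hι0
  have hι : Isometry ι := UniformSpace.Completion.coe_isometry
  haveI : TopologicalSpace.SeparableSpace (UniformSpace.Completion M) :=
    UniformSpace.Completion.denseRange_coe.separableSpace
      (UniformSpace.Completion.continuous_coe M)
  haveI : SecondCountableTopology (UniformSpace.Completion M) :=
    UniformSpace.secondCountable_of_separable _
  haveI hPolC : PolishSpace (UniformSpace.Completion M) := inferInstance
  haveI hPolZ : PolishSpace (Code × UniformSpace.Completion M) := inferInstance
  haveI hPolZ2 : PolishSpace ((Code × UniformSpace.Completion M) × (ℕ → ℕ)) :=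
    inferInstance
  -- ψ : the monotone regularization of φ
  set ψ : {K : Set ℚ // IsCompact K} → Set M := fun K =>
    ⋂ (K' : {K : Set ℚ // IsCompact K}) (_ : K.1 ⊆ K'.1), (φ K').1 with hψdef
  have hψc : ∀ K, IsCompact (ψ K) := by
    intro K
    refine IsCompact.of_isClosed_subset (φ K).2
      (isClosed_iInter (fun K' => isClosed_iInter (fun _ => (φ K').2.isClosed))) ?_
    intro x hx
    exact Set.mem_iInter.mp (Set.mem_iInter.mp hx K) (subset_refl _)
  have hψmono : ∀ {K K'}, K.1 ⊆ K'.1 → ψ K ⊆ ψ K' := by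
    intro K K' h x hx
    refine Set.mem_iInter.mpr (fun K'' => Set.mem_iInter.mpr (fun h2 => ?_))
    exact Set.mem_iInter.mp (Set.mem_iInter.mp hx K'') (h.trans h2)
  have hψcov : ∀ x : M, ∃ K, x ∈ ψ K := by
    intro x
    set S : Set {K : Set ℚ // IsCompact K} := {C | x ∉ (φ C).1} with hS
    have hnotcof : ¬ (∀ K : Set ℚ, IsCompact K → ∃ C ∈ S, K ⊆ C.1) := by
      intro hcof
      obtain ⟨C, hCS, hxC⟩ := hφ S hcof x
      exact hCS hxC
    push_neg at hnotcof
    obtain ⟨Kc, hKc, hall⟩ := hnotcof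
    refine ⟨⟨Kc, hKc⟩, Set.mem_iInter.mpr (fun K' => Set.mem_iInter.mpr (fun hsub => ?_))⟩
    by_contra hx
    exact hall K' hx hsub
  -- the code-indexed compact-valued assignment
  set KT : Code → Set M := fun c =>
    if h : conds c ∧ ¬ illf c then ψ ⟨KK c, cptKK h.1 h.2⟩ else ∅ with hKT
  set G : Set (Code × UniformSpace.Completion M) :=
    {p | (conds p.1 ∧ ¬ illf p.1) ∧ p.2 ∈ ι '' KT p.1} with hG
  set V : Set (Code × UniformSpace.Completion M) := {p | conds p.1 ∧ ¬ illf p.1} with hV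
  -- key structural fact
  have hKey : ∀ p ∈ closure G ∩ V, ∃ x : M, ι x = p.2 := by
    rintro p ⟨hpc, hpv⟩
    obtain ⟨q, hqG, hqlim⟩ := mem_closure_iff_seq_limit.mp hpc
    have hc : conds p.1 ∧ ¬ illf p.1 := hpv
    have hcseq : Tendsto (fun i => (q i).1) atTop (𝓝 p.1) :=
      (continuous_fst.tendsto p).comp hqlim
    have hwseq : Tendsto (fun i => (q i).2) atTop (𝓝 p.2) :=
      (continuous_snd.tendsto p).comp hqlim
    have hvalid : ∀ i, conds (q i).1 ∧ ¬ illf (q i).1 := fun i => (hqG i).1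
    set L : Set ℚ := KK p.1 ∪ ⋃ i, KK ((q i).1) with hL
    have hLc : IsCompact L := cptU hc.1 hc.2 _ (fun i => (hvalid i).1)
      (fun i => (hvalid i).2) (fun s => ev_agree hcseq s)
    have hsub : ∀ i, KT (q i).1 ⊆ ψ ⟨L, hLc⟩ := by
      intro i
      rw [hKT]
      simp only [dif_pos (hvalid i)]
      refine hψmono ?_
      show KK (q i).1 ⊆ L
      rw [hL]
      intro x hx
      exact Or.inr (Set.mem_iUnion.mpr ⟨i, hx⟩)
    have hclosed : IsClosed (ι '' ψ ⟨L, hLc⟩) :=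
      ((hψc ⟨L, hLc⟩).image hι.continuous).isClosed
    have hmemi : ∀ i, (q i).2 ∈ ι '' ψ ⟨L, hLc⟩ :=
      fun i => (Set.image_mono (f := ι) (hsub i)) (hqG i).2
    have hlim2 : p.2 ∈ ι '' ψ ⟨L, hLc⟩ :=
      hclosed.mem_of_tendsto hwseq (Eventually.of_forall hmemi)
    obtain ⟨x, _, hx⟩ := hlim2
    exact ⟨x, hx⟩
  -- the complement is analytic
  borelize (Code × UniformSpace.Completion M)
  have hAc : MeasureTheory.AnalyticSet (closure G ∩ V)ᶜ := by
    have hdecomp : (closure G ∩ V)ᶜ = ((closure G)ᶜ ∪ ((closure G) ∩ {p | ¬ conds p.1}))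
        ∪ ((closure G) ∩ {p | conds p.1 ∧ illf p.1}) := by
      ext p
      simp only [hV, Set.mem_compl_iff, Set.mem_inter_iff, Set.mem_union, Set.mem_setOf_eq]
      by_cases h1 : p ∈ closure G <;> by_cases h2 : conds p.1 <;> by_cases h3 : illf p.1 <;>
        tauto
    have h1 : MeasureTheory.AnalyticSet (closure G)ᶜ :=
      (isClosed_closure.isOpen_compl).measurableSet.analyticSet
    have h2 : MeasureTheory.AnalyticSet ((closure G) ∩ {p | ¬ conds p.1}) := by
      refine MeasurableSet.analyticSet ?_
      refine (isClosed_closure.measurableSet).inter ?_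
      have hcl : IsClosed {p : Code × UniformSpace.Completion M | conds p.1} :=
        isClosed_conds.preimage continuous_fst
      have : {p : Code × UniformSpace.Completion M | ¬ conds p.1}
          = {p : Code × UniformSpace.Completion M | conds p.1}ᶜ := rfl
      rw [this]
      exact hcl.isOpen_compl.measurableSet
    have h3 : MeasureTheory.AnalyticSet ((closure G) ∩ {p | conds p.1 ∧ illf p.1}) := by
      set E : Set ((Code × UniformSpace.Completion M) × (ℕ → ℕ)) :=
        {z | z.1 ∈ closure G ∧ conds z.1.1 ∧ ∀ n, z.1.1.2.2 (pfx z.2 n) = true} with hE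
      have hEeq : E = ({z : (Code × UniformSpace.Completion M) × (ℕ → ℕ) | z.1 ∈ closure G}
          ∩ {z | conds z.1.1}) ∩ ⋂ n, {z | z.1.1.2.2 (pfx z.2 n) = true} := by
        ext z
        simp only [hE, Set.mem_inter_iff, Set.mem_setOf_eq, Set.mem_iInter]
        tauto
      have hEclosed : IsClosed E := by
        rw [hEeq]
        refine IsClosed.inter (IsClosed.inter ?_ ?_) (isClosed_iInter (fun n => ?_))
        · exact isClosed_closure.preimage continuous_fst
        · exact isClosed_conds.preimage (continuous_fst.comp continuous_fst)
        · have hpre : {z : (Code × UniformSpace.Completion M) × (ℕ → ℕ) |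
              z.1.1.2.2 (pfx z.2 n) = true}
              = (fun z : (Code × UniformSpace.Completion M) × (ℕ → ℕ) =>
                  z.1.1.2.2 (pfx z.2 n)) ⁻¹' {true} := rfl
          rw [hpre]
          exact (isClosed_discrete _).preimage (continuous_branch_eval n)
      have hEq2 : (closure G) ∩ {p | conds p.1 ∧ illf p.1} = Prod.fst '' E := by
        ext p
        constructor
        · rintro ⟨hp1, hp2, y, hy⟩
          exact ⟨(p, y), ⟨hp1, hp2, hy⟩, rfl⟩
        · rintro ⟨⟨p', y⟩, ⟨h1', h2', h3'⟩, rfl⟩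
          exact ⟨h1', h2', y, h3'⟩
      rw [hEq2]
      exact (hEclosed.analyticSet).image_of_continuous continuous_fst
    rw [hdecomp]
    exact analyticSet_union (analyticSet_union h1 h2) h3
  rcases isEmpty_or_nonempty M with hM | hM
  · haveI hEmptyA : IsEmpty ↥(closure G ∩ V) :=
      ⟨fun a => hM.false (hKey a.1 a.2).choose⟩
    refine ⟨Code × UniformSpace.Completion M, inferInstance, inferInstance,
      closure G ∩ V, hAc, fun a => (hEmptyA.false a).elim, ?_, ?_⟩
    · exact continuous_iff_continuousAt.mpr (fun a => (hEmptyA.false a).elim)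
    · exact fun x => (hM.false x).elim
  · set f : ↥(closure G ∩ V) → M := fun a => Function.invFun ι a.1.2 with hfdef
    have hfι : ∀ a, ι (f a) = a.1.2 :=
      fun a => Function.invFun_eq ⟨(hKey a.1 a.2).choose, (hKey a.1 a.2).choose_spec⟩
    have hfc : Continuous f := by
      rw [hι.isEmbedding.continuous_iff]
      have heq : (ι ∘ f) = fun a : ↥(closure G ∩ V) => a.1.2 := funext hfι
      rw [heq]
      exact continuous_snd.comp continuous_subtype_val
    have hfsurj : Function.Surjective f := by
      intro x
      obtain ⟨K₀, hK₀⟩ := hψcov x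
      obtain ⟨c, hcconds, hcwf, hcsub⟩ := capture K₀.2
      have hxin : x ∈ KT c := by
        rw [hKT]
        simp only [dif_pos (⟨hcconds, hcwf⟩ : conds c ∧ ¬ illf c)]
        exact hψmono hcsub hK₀
      have hmemG : ((c, ι x) : Code × UniformSpace.Completion M) ∈ G :=
        ⟨⟨hcconds, hcwf⟩, ⟨x, hxin, rfl⟩⟩
      refine ⟨⟨(c, ι x), subset_closure hmemG, ⟨hcconds, hcwf⟩⟩, ?_⟩
      show Function.invFun ι (ι x) = x
      exact Function.leftInverse_invFun hι.injective x
    exact ⟨Code × UniformSpace.Completion M, inferInstance, inferInstance,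
      closure G ∩ V, hAc, f, hfc, hfsurj⟩

/-! ### Direction A : Sigma-1-2 implies Tukey quotient -/

set_option maxHeartbeats 1000000 in
lemma directionA {M : Type u} [TopologicalSpace M] [TopologicalSpace.MetrizableSpace M]
    [TopologicalSpace.SeparableSpace M]
    (Z : Type u) [TopologicalSpace Z] (hPol : PolishSpace Z) (A : Set Z)
    (hAc : MeasureTheory.AnalyticSet Aᶜ) (f : A → M) (hf : Continuous f)
    (hsurj : Function.Surjective f) :
    ∃ φ : {K : Set ℚ // IsCompact K} → {K : Set M // IsCompact K},
      ∀ S : Set {K : Set ℚ // IsCompact K},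
        (∀ K : Set ℚ, IsCompact K → ∃ C ∈ S, K ⊆ C.1) →
        ∀ x : M, ∃ C ∈ S, x ∈ (φ C).1 := by
  classical
  rcases isEmpty_or_nonempty M with hM | hM
  · exact ⟨fun _ => ⟨∅, isCompact_empty⟩, fun S hS x => (hM.false x).elim⟩
  have hAne : Nonempty A := by
    obtain ⟨a, _⟩ := hsurj (Classical.arbitrary M)
    exact ⟨a⟩
  haveI hZne : Nonempty Z := ⟨(Classical.arbitrary A).1⟩
  letI := TopologicalSpace.upgradeIsCompletelyMetrizable Z
  rw [MeasureTheory.AnalyticSet] at hAc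
  rcases hAc with hAe | ⟨g, hgc, hgr⟩
  · -- A = univ
    have hAuniv : A = Set.univ := by
      rw [← Set.compl_empty, ← hAe, compl_compl]
    have hpre : ∀ C : {K : Set ℚ // IsCompact K},
        IsCompact ((Subtype.val : A → Z) ⁻¹' (Qcpt (hmap C.1))) := by
      intro C
      exact preimage_val_compact (Qcpt_compact _) (by rw [hAuniv]; exact Set.subset_univ _)
    refine ⟨fun C => ⟨f '' ((Subtype.val : A → Z) ⁻¹' (Qcpt (hmap C.1))),
      (hpre C).image hf⟩, ?_⟩
    intro S hS x
    obtain ⟨a, ha⟩ := hsurj x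
    obtain ⟨v, hv⟩ := Qcpt_cover (Z := Z) a.1
    obtain ⟨C, hCS, hsub⟩ := hS _ (Kv_compact v)
    refine ⟨C, hCS, ⟨a, ?_, ha⟩⟩
    show a.1 ∈ Qcpt (hmap C.1)
    refine Qcpt_mono (fun n => ?_) hv
    exact le_trans (hmap_Kv_ge v n) (hmap_mono C.2 hsub n)
  · -- general coanalytic case
    set TR : Z → Set Lst := fun z =>
      {s | Metric.infDist z (g '' cyl s) < (2⁻¹:ℝ)^s.length} with hTR
    have hTRpc : ∀ z, ∀ {a b : Lst}, a <+: b → b ∈ TR z → a ∈ TR z := by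
      intro z a b hab hb
      have h1 : Metric.infDist z (g '' cyl a) ≤ Metric.infDist z (g '' cyl b) :=
        Metric.infDist_le_infDist_of_subset (Set.image_mono (f := g) (cyl_mono hab))
          ((cyl_nonempty b).image g)
      have h2 : ((2⁻¹:ℝ)^b.length) ≤ (2⁻¹:ℝ)^a.length :=
        pow_le_pow_of_le_one (by norm_num) (by norm_num) hab.length_le
      exact lt_of_le_of_lt h1 (lt_of_lt_of_le hb h2)
    have hTRwf : ∀ z : Z, z ∈ A → ¬ ∃ y : ℕ → ℕ, ∀ n, pfx y n ∈ TR z := by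
      rintro z hzA ⟨y, hy⟩
      have hex : ∀ n : ℕ, ∃ u ∈ cyl (pfx y n), dist z (g u) < (2⁻¹:ℝ)^n := by
        intro n
        have h1 := hy n
        rw [hTR] at h1
        simp only [Set.mem_setOf_eq, pfx_length] at h1
        obtain ⟨w, hw1, hw2⟩ :=
          (Metric.infDist_lt_iff ((cyl_nonempty (pfx y n)).image g)).mp h1
        obtain ⟨u, hu, rfl⟩ := hw1
        exact ⟨u, hu, hw2⟩
      choose u hu hdist using hex
      have hulim : Tendsto u atTop (𝓝 y) := by
        rw [tendsto_pi_nhds]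
        intro i
        have hev : ∀ᶠ n in atTop, u n i = y i := by
          filter_upwards [eventually_gt_atTop i] with n hn
          have h3 : pfx (u n) n = pfx y n := by
            have h4' : pfx (u n) ((pfx y n).length) = pfx y n := hu n
            rwa [pfx_length] at h4'
          have h5 : (pfx (u n) n).getD i 0 = (pfx y n).getD i 0 := by rw [h3]
          rwa [pfx_getD hn, pfx_getD hn] at h5
        exact Tendsto.congr' (hev.mono fun n h => h.symm) tendsto_const_nhds
      have h5 : Tendsto (fun n => g (u n)) atTop (𝓝 (g y)) := (hgc.tendsto y).comp hulim
      have h6 : Tendsto (fun n => g (u n)) atTop (𝓝 z) := by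
        rw [tendsto_iff_dist_tendsto_zero]
        have hb : ∀ n, dist (g (u n)) z ≤ (2⁻¹:ℝ)^n := fun n => by
          rw [dist_comm]; exact (hdist n).le
        exact squeeze_zero (fun n => dist_nonneg) hb
          (tendsto_pow_atTop_nhds_zero_of_lt_one (by norm_num) (by norm_num))
      have h7 : g y = z := tendsto_nhds_unique h5 h6
      have h8 : z ∈ Aᶜ := by rw [← hgr]; exact ⟨y, h7⟩
      exact h8 hzA
    set ZC : {K : Set ℚ // IsCompact K} → Set Z := fun C =>
      {z | ∀ s : Lst, s ∉ thTree C.1 → (2⁻¹:ℝ)^s.length ≤ Metric.infDist z (g '' cyl s)}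
        ∩ Qcpt (hmap C.1) with hZC
    have hZCcpt : ∀ C, IsCompact (ZC C) := by
      intro C
      refine IsCompact.inter_left (Qcpt_compact _) ?_
      have heq : {z : Z | ∀ s : Lst, s ∉ thTree C.1 →
          (2⁻¹:ℝ)^s.length ≤ Metric.infDist z (g '' cyl s)}
          = ⋂ (s : Lst) (_ : s ∉ thTree C.1),
              (fun z => Metric.infDist z (g '' cyl s)) ⁻¹' (Set.Ici ((2⁻¹:ℝ)^s.length)) := by
        ext z
        simp only [Set.mem_setOf_eq, Set.mem_iInter, Set.mem_preimage, Set.mem_Ici]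
      rw [heq]
      exact isClosed_iInter (fun s => isClosed_iInter (fun _ =>
        IsClosed.preimage (Metric.continuous_infDist_pt _) isClosed_Ici))
    have hZCsubA : ∀ C, ZC C ⊆ A := by
      intro C z hz
      by_contra hzA
      have hzc : z ∈ Aᶜ := hzA
      rw [← hgr] at hzc
      obtain ⟨y, rfl⟩ := hzc
      have hmem : ∀ n, pfx y n ∈ thTree C.1 := by
        intro n
        by_contra hn
        have h1 := hz.1 _ hn
        have h2 : Metric.infDist (g y) (g '' cyl (pfx y n)) = 0 := by
          apply Metric.infDist_zero_of_mem
          refine ⟨y, ?_, rfl⟩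
          show pfx y (pfx y n).length = pfx y n
          rw [pfx_length]
        rw [h2] at h1
        have h3 : (0:ℝ) < (2⁻¹:ℝ)^(pfx y n).length := by positivity
        linarith
      exact thTree_wf C.2 (illf_qcode.mpr ⟨y, hmem⟩)
    refine ⟨fun C => ⟨f '' ((Subtype.val : A → Z) ⁻¹' ZC C),
      (preimage_val_compact (hZCcpt C) (hZCsubA C)).image hf⟩, ?_⟩
    intro S hS x
    obtain ⟨a, ha⟩ := hsurj x
    obtain ⟨v, hv⟩ := Qcpt_cover (Z := Z) a.1
    have hTRa : ¬ illf (qcode (TR a.1)) := by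
      rw [illf_qcode]
      exact hTRwf a.1 a.2
    have hK0 : IsCompact (KK (qcode (SV v)) ∪ KK (qcode (TR a.1))) :=
      (Kv_compact v).union (cptKK (conds_qcode _) hTRa)
    obtain ⟨C, hCS, hsub⟩ := hS _ hK0
    refine ⟨C, hCS, ⟨a, ?_, ha⟩⟩
    show a.1 ∈ ZC C
    constructor
    · intro s hs
      by_contra hlt
      push_neg at hlt
      have hsTR : s ∈ TR a.1 := hlt
      apply hs
      intro t ht htne
      have htTR : t ∈ TR a.1 := hTRpc a.1 ht hsTR
      have : qlab t ∈ KK (qcode (TR a.1)) :=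
        ⟨t, (inS_qcode (fun hab hb => hTRpc a.1 hab hb)).mpr htTR, lab_qcode _ _⟩
      exact hsub (Or.inr this)
    · refine Qcpt_mono (fun n => ?_) hv
      refine le_trans (hmap_Kv_ge v n) (hmap_mono C.2 ?_ n)
      exact fun q hq => hsub (Or.inl hq)

end TukeySigma

universe u

/-- For a separable metrizable space `M`, we have `𝒦(ℚ) ≥_T (M,𝒦(M))` if and only if `M`
is `Σ¹₂`, i.e. a continuous image of a coanalytic subset of a Polish space. -/
theorem compactsRat_tukey_quotient_iff_sigma12
    (M : Type u) [TopologicalSpace M]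
    [TopologicalSpace.MetrizableSpace M] [TopologicalSpace.SeparableSpace M] :
    (∃ φ : {K : Set ℚ // IsCompact K} → {K : Set M // IsCompact K},
      ∀ S : Set {K : Set ℚ // IsCompact K},
        (∀ K : Set ℚ, IsCompact K → ∃ C ∈ S, K ⊆ C.1) →
        ∀ x : M, ∃ C ∈ S, x ∈ (φ C).1) ↔
    (∃ (Z : Type u) (_ : TopologicalSpace Z), PolishSpace Z ∧
      ∃ A : Set Z, MeasureTheory.AnalyticSet Aᶜ ∧
        ∃ f : A → M, Continuous f ∧ Function.Surjective f) := by
  constructor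
  · rintro ⟨φ, hφ⟩
    exact TukeySigma.directionB φ hφ
  · rintro ⟨Z, _, hPol, A, hAc, f, hf, hsurj⟩
    exact TukeySigma.directionA Z hPol A hAc f hf hsurj
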